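/- arXiv:1805.10797 — 4 statements merged into one kernel-verified Lean document; each statement's English description precedes it below -/
import Mathlib

section
/- The σ-algebra on the space M₊(S) of finite non-negative Borel measures on a complete separable metric space (S,ϱ) generated by the evaluation mappings μ ↦ μ(A), A Borel in S, coincides with the Borel σ-algebra induced by the Lévy–Prokhorov metric π on M₊(S). -/
open MeasureTheory Topology Metric Filter Set ENNReal NNReal

namespace LPAux

variable {S : Type*} [MetricSpace S] [MeasurableSpace S] [BorelSpace S]

/-- The underlying measure of a point of the Lévy-Prokhorov type synonym. -/
noncomputable def toM (μ : LevyProkhorov (FiniteMeasure S)) : Measure S :=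
  (LevyProkhorov.toMeasureEquiv (α := FiniteMeasure S) μ : Measure S)

instance (μ : LevyProkhorov (FiniteMeasure S)) : IsFiniteMeasure (toM μ) :=
  (LevyProkhorov.toMeasureEquiv (α := FiniteMeasure S) μ).prop

lemma edist_eq (μ ν : LevyProkhorov (FiniteMeasure S)) :
    edist μ ν = levyProkhorovEDist (toM μ) (toM ν) := by
  rw [edist_dist]
  exact ENNReal.ofReal_toReal (levyProkhorovEDist_ne_top _ _)

lemma isOpen_lt_const {F : Set S} (hF : IsClosed F) (c : ℝ≥0∞) :
    IsOpen {μ : LevyProkhorov (FiniteMeasure S) | toM μ F < c} := by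
  rw [Metric.isOpen_iff]
  intro μ hμ
  obtain ⟨b, hb1, hb2⟩ := exists_between (show toM μ F < c from hμ)
  have key := tendsto_measure_thickening (μ := toM μ) (s := F) ⟨1, one_pos, measure_ne_top _ _⟩
  rw [hF.closure_eq] at key
  set e : ℝ≥0∞ := min 1 (c - b) with he
  have he0 : e ≠ 0 :=
    (lt_min one_pos (tsub_pos_of_lt hb2)).ne'
  have heT : e ≠ ∞ := ne_top_of_le_ne_top one_ne_top (min_le_left _ _)
  have heR : 0 < e.toReal := toReal_pos he0 heT
  have ev : ∀ᶠ δ in 𝓝[>] (0:ℝ), toM μ (thickening δ F) < b ∧ δ ∈ Ioo 0 e.toReal := by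
    filter_upwards [key.eventually_lt_const hb1, Ioo_mem_nhdsGT_of_mem ⟨le_rfl, heR⟩] with δ h1 h2
      using ⟨h1, h2⟩
  obtain ⟨δ, hδ1, hδ2⟩ := ev.exists
  refine ⟨δ, hδ2.1, fun ν hν => ?_⟩
  have hlt : levyProkhorovEDist (toM μ) (toM ν) < ENNReal.ofReal δ := by
    rw [← edist_eq, edist_comm]
    exact edist_lt_ofReal.mpr hν
  have h3 := right_measure_le_of_levyProkhorovEDist_lt hlt
    (B_mble := hF.measurableSet)
  rw [ENNReal.toReal_ofReal hδ2.1.le] at h3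
  have h4 : ENNReal.ofReal δ ≤ c - b := by
    calc ENNReal.ofReal δ ≤ ENNReal.ofReal e.toReal := ofReal_le_ofReal hδ2.2.le
    _ = e := ofReal_toReal heT
    _ ≤ c - b := min_le_right _ _
  calc toM ν F ≤ toM μ (thickening δ F) + ENNReal.ofReal δ := h3
    _ < b + ENNReal.ofReal δ := by
        exact ENNReal.add_lt_add_right ofReal_ne_top hδ1
    _ ≤ b + (c - b) := add_le_add_right h4 _
    _ = c := add_tsub_cancel_of_le hb2.le

lemma measurable_toM_apply {A : Set S} (hA : MeasurableSet A) :
    Measurable[borel (LevyProkhorov (FiniteMeasure S))]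
      (fun μ : LevyProkhorov (FiniteMeasure S) => toM μ A) := by
  letI : MeasurableSpace (LevyProkhorov (FiniteMeasure S)) := borel _
  haveI : BorelSpace (LevyProkhorov (FiniteMeasure S)) := ⟨rfl⟩
  have huniv : Measurable (fun μ : LevyProkhorov (FiniteMeasure S) => toM μ univ) := by
    apply measurable_of_Iio
    intro c
    exact (isOpen_lt_const isClosed_univ c).measurableSet
  revert A
  have := MeasurableSpace.induction_on_inter (α := S)
    (C := fun A _ => Measurable (fun μ : LevyProkhorov (FiniteMeasure S) => toM μ A))
    (BorelSpace.measurable_eq.trans borel_eq_generateFrom_isClosed)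
    isPiSystem_isClosed
    (by simp only [measure_empty]; exact measurable_const)
    (fun t ht => by
      apply measurable_of_Iio
      intro c
      exact (isOpen_lt_const ht c).measurableSet)
    (fun t htm hC => by
      have : (fun μ : LevyProkhorov (FiniteMeasure S) => toM μ tᶜ)
          = fun μ => toM μ univ - toM μ t := by
        funext μ
        rw [measure_compl htm (measure_ne_top _ _)]
      show Measurable _
      rw [this]
      exact huniv.sub hC)
    (fun f hdisj hfm hC => by
      have : (fun μ : LevyProkhorov (FiniteMeasure S) => toM μ (⋃ i, f i))
          = fun μ => ∑' i, toM μ (f i) := by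
        funext μ
        exact measure_iUnion hdisj hfm
      show Measurable _
      rw [this]
      exact Measurable.ennreal_tsum hC)
  exact fun A hA => this A hA

end LPAux
section T2
open MeasureTheory Topology Metric Filter Set ENNReal NNReal
namespace LPAux
variable {S : Type*} [MetricSpace S] [MeasurableSpace S] [BorelSpace S]

/-- The σ-algebra generated by the evaluation maps. -/
noncomputable def evalSigma (S : Type*) [MetricSpace S] [MeasurableSpace S] :
    MeasurableSpace (LevyProkhorov (FiniteMeasure S)) :=
  ⨆ (A : Set S) (_ : MeasurableSet A),
    MeasurableSpace.comap
      (fun μ : LevyProkhorov (FiniteMeasure S) =>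
        (LevyProkhorov.toMeasureEquiv (α := FiniteMeasure S) μ) A) inferInstance

lemma evalSigma_le_borel :
    evalSigma S ≤ borel (LevyProkhorov (FiniteMeasure S)) := by
  apply iSup₂_le
  intro A hA
  rw [← measurable_iff_comap_le]
  have : (fun μ : LevyProkhorov (FiniteMeasure S) =>
      (LevyProkhorov.toMeasureEquiv (α := FiniteMeasure S) μ) A)
      = fun μ => (toM μ A).toNNReal := rfl
  rw [this]
  exact ENNReal.measurable_toNNReal.comp (measurable_toM_apply hA)

lemma measurable_eval {A : Set S} (hA : MeasurableSet A) :
    Measurable[evalSigma S] (fun μ : LevyProkhorov (FiniteMeasure S) => toM μ A) := by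
  have h1 : Measurable[evalSigma S] (fun μ : LevyProkhorov (FiniteMeasure S) =>
      (LevyProkhorov.toMeasureEquiv (α := FiniteMeasure S) μ) A) := by
    rw [measurable_iff_comap_le]
    exact le_iSup₂ (f := fun (A : Set S) (_ : MeasurableSet A) =>
      MeasurableSpace.comap (fun μ : LevyProkhorov (FiniteMeasure S) =>
        (LevyProkhorov.toMeasureEquiv (α := FiniteMeasure S) μ) A) inferInstance) A hA
  have : (fun μ : LevyProkhorov (FiniteMeasure S) => toM μ A)
      = fun μ => (((LevyProkhorov.toMeasureEquiv (α := FiniteMeasure S) μ) A : ℝ≥0) : ℝ≥0∞) := by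
    funext μ
    exact (FiniteMeasure.ennreal_coeFn_eq_coeFn_toMeasure _ _).symm
  rw [this]
  exact measurable_coe_nnreal_ennreal.comp h1

end LPAux
end T2
section T3
open MeasureTheory Topology Metric Filter Set ENNReal NNReal
open scoped Classical
namespace LPAux
variable {S : Type*} [MetricSpace S] [MeasurableSpace S] [BorelSpace S]

/-- Finite unions of balls with centers in a countable dense sequence and rational radii. -/
def ratU (xs : ℕ → S) (fs : Finset (ℕ × ℚ)) : Set S :=
  ⋃ p ∈ fs, Metric.ball (xs p.1) (p.2 : ℝ)

lemma isOpen_ratU (xs : ℕ → S) (fs : Finset (ℕ × ℚ)) : IsOpen (ratU xs fs) :=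
  isOpen_biUnion fun _ _ => isOpen_ball

lemma measurableSet_ratU (xs : ℕ → S) (fs : Finset (ℕ × ℚ)) : MeasurableSet (ratU xs fs) :=
  (isOpen_ratU xs fs).measurableSet

lemma open_approx {xs : ℕ → S} (hxs : DenseRange xs) {G : Set S} (hG : IsOpen G)
    (μ : Measure S) {a : ℝ≥0∞} (ha : a < μ G) :
    ∃ fs : Finset (ℕ × ℚ), ratU xs fs ⊆ G ∧ a < μ (ratU xs fs) := by
  set s' : ℕ × ℚ → Set S := fun p =>
    if Metric.ball (xs p.1) (p.2 : ℝ) ⊆ G then Metric.ball (xs p.1) (p.2 : ℝ) else ∅ with hs'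
  have hcover : ⋃ p, s' p = G := by
    apply subset_antisymm
    · apply iUnion_subset
      intro p
      by_cases h : Metric.ball (xs p.1) (p.2 : ℝ) ⊆ G
      · simpa [s', h] using h
      · simp [s', h]
    · intro x hx
      obtain ⟨r, hr, hball⟩ := Metric.isOpen_iff.mp hG x hx
      obtain ⟨n, hn⟩ := Metric.denseRange_iff.mp hxs x (r/4) (by positivity)
      obtain ⟨q, hq1, hq2⟩ := exists_rat_btwn (show dist x (xs n) < r/2 by linarith)
      have hsub : Metric.ball (xs n) (q : ℝ) ⊆ G := by
        intro y hy
        apply hball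
        have : dist y x ≤ dist y (xs n) + dist (xs n) x := dist_triangle _ _ _
        rw [Metric.mem_ball] at hy ⊢
        calc dist y x ≤ dist y (xs n) + dist (xs n) x := dist_triangle _ _ _
          _ < q + q := by
              apply add_lt_add hy
              calc dist (xs n) x = dist x (xs n) := dist_comm _ _
                _ < q := hq1
          _ < r := by
              have : (q:ℝ) < r/2 := hq2
              linarith
      refine mem_iUnion.mpr ⟨(n, q), ?_⟩
      simp only [s', hsub, if_true]
      exact Metric.mem_ball.mpr hq1
  set w : Finset (ℕ × ℚ) → Set S := fun t => ⋃ p ∈ t, s' p with hw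
  have hwu : ⋃ t, w t = G := by
    rw [← hcover]
    apply subset_antisymm
    · exact iUnion_subset fun t => iUnion₂_subset fun p _ => subset_iUnion s' p
    · intro x hx
      obtain ⟨p, hp⟩ := mem_iUnion.mp hx
      exact mem_iUnion.mpr ⟨{p}, by simpa [w] using hp⟩
  have hmono : Monotone w := fun t t' htt' => biUnion_subset_biUnion_left htt'
  have := hmono.measure_iUnion (μ := μ)
  rw [hwu] at this
  rw [this] at ha
  obtain ⟨t, ht⟩ := lt_iSup_iff.mp ha
  refine ⟨t.filter (fun p => Metric.ball (xs p.1) (p.2 : ℝ) ⊆ G), ?_, ?_⟩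
  · apply iUnion₂_subset
    intro p hp
    exact (Finset.mem_filter.mp hp).2
  · have : w t = ratU xs (t.filter (fun p => Metric.ball (xs p.1) (p.2 : ℝ) ⊆ G)) := by
      apply subset_antisymm
      · apply iUnion₂_subset
        intro p hp
        by_cases h : Metric.ball (xs p.1) (p.2 : ℝ) ⊆ G
        · have : p ∈ t.filter (fun p => Metric.ball (xs p.1) (p.2 : ℝ) ⊆ G) :=
            Finset.mem_filter.mpr ⟨hp, h⟩
          simpa [s', h, ratU] using subset_biUnion_of_mem (u := fun p =>
            Metric.ball (xs p.1) (p.2 : ℝ)) this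
        · simp [s', h]
      · apply iUnion₂_subset
        intro p hp
        rw [Finset.mem_filter] at hp
        have : s' p = Metric.ball (xs p.1) (p.2 : ℝ) := by simp [s', hp.2]
        rw [← this]
        exact subset_biUnion_of_mem (u := s') hp.1
    rwa [← this]

/-- If the LP conditions hold at a rational level on all finite unions of rational balls,
then the LP distance is at most that level. -/
lemma lpEDist_le_of_ratU {xs : ℕ → S} (hxs : DenseRange xs)
    (μ ν : Measure S) [IsFiniteMeasure μ] [IsFiniteMeasure ν] {q : ℚ} (hq : 0 ≤ q)
    (H : ∀ fs : Finset (ℕ × ℚ),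
      μ (ratU xs fs) ≤ ν (thickening (q : ℝ) (ratU xs fs)) + ENNReal.ofReal q ∧
      ν (ratU xs fs) ≤ μ (thickening (q : ℝ) (ratU xs fs)) + ENNReal.ofReal q) :
    levyProkhorovEDist μ ν ≤ ENNReal.ofReal q := by
  apply levyProkhorovEDist_le_of_forall
  intro ε B hε hεtop hB
  have hq' : (q : ℝ) < ε.toReal := by
    have := (ENNReal.toReal_lt_toReal ofReal_ne_top hεtop.ne).mpr hε
    rwa [ENNReal.toReal_ofReal (by exact_mod_cast hq)] at this
  have key : ∀ (ρ σ : Measure S), [IsFiniteMeasure ρ] → [IsFiniteMeasure σ] →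
      (∀ fs : Finset (ℕ × ℚ),
        ρ (ratU xs fs) ≤ σ (thickening (q : ℝ) (ratU xs fs)) + ENNReal.ofReal q) →
      ρ B ≤ σ (thickening ε.toReal B) + ε := by
    intro ρ σ _ _ H1
    set δ : ℝ := (ε.toReal - q) / 2 with hδ
    have hδpos : 0 < δ := by simp only [hδ]; linarith
    have h1 : ρ B ≤ ρ (closure B) := measure_mono subset_closure
    refine le_trans h1 (le_of_forall_lt fun a ha => ?_)
    have h2 : a < ρ (thickening δ (closure B)) :=
      ha.trans_le (measure_mono (self_subset_thickening hδpos _))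
    obtain ⟨fs, hfs1, hfs2⟩ := open_approx hxs isOpen_thickening ρ h2
    have h3 : a < σ (thickening (q : ℝ) (ratU xs fs)) + ENNReal.ofReal q :=
      hfs2.trans_le (H1 fs)
    have h4 : thickening (q : ℝ) (ratU xs fs) ⊆ thickening ε.toReal B := by
      calc thickening (q : ℝ) (ratU xs fs)
          ⊆ thickening (q : ℝ) (thickening δ (closure B)) := thickening_subset_of_subset _ hfs1
        _ ⊆ thickening ((q : ℝ) + δ) (closure B) := thickening_thickening_subset _ _ _
        _ ⊆ thickening ε.toReal (closure B) := by
            apply thickening_mono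
            simp only [hδ]; linarith
        _ = thickening ε.toReal B := thickening_closure
    have h5 : ENNReal.ofReal q ≤ ε := by
      rw [← ENNReal.ofReal_toReal hεtop.ne]
      exact ofReal_le_ofReal hq'.le
    exact h3.trans_le (add_le_add (measure_mono h4) h5)
  exact ⟨key μ ν (fun fs => (H fs).1), key ν μ (fun fs => (H fs).2)⟩

end LPAux
end T3
section T4
open MeasureTheory Topology Metric Filter Set ENNReal NNReal
namespace LPAux
variable {S : Type*} [MetricSpace S] [MeasurableSpace S] [BorelSpace S]

lemma measurableSet_edist_lt {xs : ℕ → S} (hxs : DenseRange xs)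
    (μ : LevyProkhorov (FiniteMeasure S)) (c : ℝ≥0∞) :
    MeasurableSet[evalSigma S] {ν : LevyProkhorov (FiniteMeasure S) | edist μ ν < c} := by
  have hset : {ν : LevyProkhorov (FiniteMeasure S) | edist μ ν < c}
      = ⋃ (q : ℚ) (_ : 0 ≤ q ∧ (ENNReal.ofReal q) < c),
          {ν : LevyProkhorov (FiniteMeasure S) | ∀ fs : Finset (ℕ × ℚ),
            toM μ (ratU xs fs) ≤ toM ν (thickening (q : ℝ) (ratU xs fs)) + ENNReal.ofReal q ∧
            toM ν (ratU xs fs) ≤ toM μ (thickening (q : ℝ) (ratU xs fs)) + ENNReal.ofReal q} := by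
    ext ν
    simp only [mem_setOf_eq, mem_iUnion, exists_prop]
    constructor
    · intro h
      rw [edist_eq] at h
      obtain ⟨q, hq0, hq1, hq2⟩ := ENNReal.lt_iff_exists_rat_btwn.mp h
      have hco : ((Real.toNNReal q : ℝ≥0) : ℝ≥0∞) = ENNReal.ofReal q := rfl
      rw [hco] at hq1 hq2
      refine ⟨q, ⟨hq0, hq2⟩, fun fs => ?_⟩
      have h1 := left_measure_le_of_levyProkhorovEDist_lt hq1 (measurableSet_ratU xs fs)
      have h2 := right_measure_le_of_levyProkhorovEDist_lt hq1 (measurableSet_ratU xs fs)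
      rw [ENNReal.toReal_ofReal (by exact_mod_cast hq0)] at h1 h2
      exact ⟨h1, h2⟩
    · rintro ⟨q, ⟨hq0, hqc⟩, H⟩
      rw [edist_eq]
      exact (lpEDist_le_of_ratU hxs (toM μ) (toM ν) hq0 H).trans_lt hqc
  rw [hset]
  apply MeasurableSet.iUnion
  intro q
  apply MeasurableSet.iUnion
  intro _
  have : {ν : LevyProkhorov (FiniteMeasure S) | ∀ fs : Finset (ℕ × ℚ),
      toM μ (ratU xs fs) ≤ toM ν (thickening (q : ℝ) (ratU xs fs)) + ENNReal.ofReal q ∧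
      toM ν (ratU xs fs) ≤ toM μ (thickening (q : ℝ) (ratU xs fs)) + ENNReal.ofReal q}
      = ⋂ fs : Finset (ℕ × ℚ),
        (((fun ν : LevyProkhorov (FiniteMeasure S) =>
            toM ν (thickening (q : ℝ) (ratU xs fs)) + ENNReal.ofReal q) ⁻¹'
          (Ici (toM μ (ratU xs fs)))) ∩
        ((fun ν : LevyProkhorov (FiniteMeasure S) => toM ν (ratU xs fs)) ⁻¹'
          (Iic (toM μ (thickening (q : ℝ) (ratU xs fs)) + ENNReal.ofReal q)))) := by
    ext ν
    simp only [mem_setOf_eq, mem_iInter, mem_inter_iff, mem_preimage, mem_Ici, mem_Iic]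
  rw [this]
  apply MeasurableSet.iInter
  intro fs
  have hm1 : Measurable[evalSigma S] (fun ν : LevyProkhorov (FiniteMeasure S) =>
      toM ν (thickening (q : ℝ) (ratU xs fs)) + ENNReal.ofReal q) :=
    (measurable_eval isOpen_thickening.measurableSet).add measurable_const
  have hm2 : Measurable[evalSigma S] (fun ν : LevyProkhorov (FiniteMeasure S) =>
      toM ν (ratU xs fs)) := measurable_eval (measurableSet_ratU xs fs)
  exact (hm1 measurableSet_Ici).inter (hm2 measurableSet_Iic)

lemma measurableSet_ball {xs : ℕ → S} (hxs : DenseRange xs)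
    (μ : LevyProkhorov (FiniteMeasure S)) (r : ℝ) :
    MeasurableSet[evalSigma S] (Metric.ball μ r) := by
  have : Metric.ball μ r = {ν : LevyProkhorov (FiniteMeasure S) | edist μ ν < ENNReal.ofReal r} := by
    ext ν
    simp only [Metric.mem_ball, mem_setOf_eq, edist_lt_ofReal, dist_comm]
  rw [this]
  exact measurableSet_edist_lt hxs μ _
end LPAux
end T4
section T5
open MeasureTheory Topology Metric Filter Set ENNReal NNReal
open scoped Classical
namespace LPAux
variable {S : Type*} [MetricSpace S] [MeasurableSpace S] [BorelSpace S]

noncomputable def ratMeas (xs : ℕ → S) (fs : Finset (ℕ × ℕ × ℚ)) : Measure S :=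
  ∑ p ∈ fs, (ENNReal.ofReal (p.2.2 : ℝ)) • Measure.dirac (xs p.2.1)

instance (xs : ℕ → S) (fs : Finset (ℕ × ℕ × ℚ)) : IsFiniteMeasure (ratMeas xs fs) := by
  constructor
  rw [ratMeas, Measure.finset_sum_apply]
  apply ENNReal.sum_lt_top.mpr
  intro p _
  simp [Measure.smul_apply, ofReal_lt_top]

noncomputable def ratLP (xs : ℕ → S) (fs : Finset (ℕ × ℕ × ℚ)) :
    LevyProkhorov (FiniteMeasure S) :=
  (LevyProkhorov.toMeasureEquiv (α := FiniteMeasure S)).symm ⟨ratMeas xs fs, inferInstance⟩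

lemma toM_ratLP (xs : ℕ → S) (fs : Finset (ℕ × ℕ × ℚ)) :
    toM (ratLP xs fs) = ratMeas xs fs := rfl

lemma denseRange_ratLP [SecondCountableTopology S] {xs : ℕ → S} (hxs : DenseRange xs) :
    DenseRange (ratLP (S := S) xs) := by
  rw [Metric.denseRange_iff]
  intro μ ε hε
  set ε' : ℝ := ε / 3 with hε'def
  have hε' : 0 < ε' := by positivity
  obtain ⟨As, As_mble, As_bdd, As_diam, As_cover, As_disj⟩ :=
    SeparableSpace.exists_measurable_partition_diam_le S hε'
  -- find N with small tail
  set B : ℕ → Set S := fun n => ⋃ k ∈ Finset.range n, As k with hB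
  have hBmono : Monotone B := by
    intro a b hab
    exact biUnion_subset_biUnion_left (Finset.range_subset_range.mpr hab)
  have hBuniv : ⋃ n, B n = univ := by
    rw [← As_cover]
    apply subset_antisymm
    · exact iUnion_subset fun n => iUnion₂_subset fun k _ => subset_iUnion As k
    · refine iUnion_subset fun k => ?_
      intro x hx
      exact mem_iUnion.mpr ⟨k + 1, mem_biUnion (Finset.self_mem_range_succ k) hx⟩
  have hBmble : ∀ n, MeasurableSet (B n) := fun n => Finset.measurableSet_biUnion _ fun k _ => As_mble k
  set e : ℝ≥0∞ := ENNReal.ofReal ε' with he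
  have he0 : e ≠ 0 := by simp [he, hε'.not_ge]
  have heT : e ≠ ∞ := ofReal_ne_top
  set t : ℝ≥0∞ := toM μ univ with ht
  have htT : t ≠ ∞ := measure_ne_top _ _
  have hN : ∃ N : ℕ, toM μ (B N)ᶜ < e := by
    by_cases ht0 : t = 0
    · refine ⟨0, ?_⟩
      calc toM μ (B 0)ᶜ ≤ toM μ univ := measure_mono (subset_univ _)
        _ = 0 := ht0
        _ < e := pos_iff_ne_zero.mpr he0
    · have htend := tendsto_measure_iUnion_atTop (μ := toM μ) hBmono
      rw [hBuniv] at htend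
      have hlt : t - e / 2 < t :=
        ENNReal.sub_lt_self htT ht0 (by simp [ENNReal.div_eq_zero_iff, he0])
      obtain ⟨N, hN⟩ := (htend.eventually_const_lt hlt).exists
      refine ⟨N, ?_⟩
      have h1 : toM μ (B N)ᶜ = t - toM μ (B N) := measure_compl (hBmble N) (measure_ne_top _ _)
      rw [h1]
      by_cases he2 : e / 2 ≤ t
      · calc t - toM μ (B N) ≤ t - (t - e / 2) := tsub_le_tsub_left hN.le t
          _ = e / 2 := ENNReal.sub_sub_cancel htT he2
          _ < e := ENNReal.half_lt_self he0 heT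
      · calc t - toM μ (B N) ≤ t := tsub_le_self
          _ ≤ e / 2 := (not_le.mp he2).le
          _ < e := ENNReal.half_lt_self he0 heT
  obtain ⟨N, hN⟩ := hN
  set cN : ℝ := ε' / (N + 1) with hcN
  have hcN0 : 0 < cN := by positivity
  -- choices
  have Hc : ∀ n : ℕ, ∃ (k : ℕ) (q : ℚ), 0 ≤ q ∧ ((As n).Nonempty →
      (∃ a ∈ As n, dist a (xs k) < ε') ∧
      (toM μ (As n)).toReal < q ∧ (q : ℝ) < (toM μ (As n)).toReal + cN) := by
    intro n
    by_cases h : (As n).Nonempty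
    · obtain ⟨a, ha⟩ := h
      obtain ⟨k, hk⟩ := Metric.denseRange_iff.mp hxs a ε' hε'
      obtain ⟨q, hq1, hq2⟩ := exists_rat_btwn
        (lt_add_of_pos_right (toM μ (As n)).toReal hcN0)
      refine ⟨k, q, ?_, fun _ => ⟨⟨a, ha, hk⟩, hq1, hq2⟩⟩
      have : (0 : ℝ) ≤ (q : ℝ) := le_trans ENNReal.toReal_nonneg hq1.le
      exact_mod_cast this
    · exact ⟨0, 0, le_refl 0, fun hn => absurd hn h⟩
  choose k q hq0 hqP using Hc
  set P : Finset ℕ := (Finset.range N).filter (fun n => (As n).Nonempty) with hP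
  have hinj : Set.InjOn (fun n => (n, k n, q n)) ↑P := fun a _ b _ h => (Prod.mk.injEq _ _ _ _ ▸ h).1
  set fs : Finset (ℕ × ℕ × ℚ) := P.image (fun n => (n, k n, q n)) with hfs
  set ν : Measure S := ratMeas xs fs with hν
  have hνB : ∀ C : Set S, MeasurableSet C →
      ν C = ∑ n ∈ P, ENNReal.ofReal (q n) * (C.indicator 1 (xs (k n))) := by
    intro C hC
    rw [hν, ratMeas, Measure.finset_sum_apply, hfs, Finset.sum_image hinj]
    refine Finset.sum_congr rfl fun n _ => ?_
    rw [Measure.smul_apply, Measure.dirac_apply' _ hC, smul_eq_mul]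
  have hq_le : ∀ n ∈ P, toM μ (As n) ≤ ENNReal.ofReal (q n) := by
    intro n hn
    have hne : (As n).Nonempty := (Finset.mem_filter.mp hn).2
    have := ((hqP n hne).2.1).le
    calc toM μ (As n) = ENNReal.ofReal (toM μ (As n)).toReal :=
          (ofReal_toReal (measure_ne_top _ _)).symm
      _ ≤ ENNReal.ofReal (q n) := ofReal_le_ofReal this
  -- the main estimate
  have main : levyProkhorovEDist (toM μ) ν ≤ ENNReal.ofReal (2 * ε') := by
    apply levyProkhorovEDist_le_of_forall
    intro θ C hθ hθtop hC
    have hθR : 2 * ε' < θ.toReal := by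
      have := (ENNReal.toReal_lt_toReal ofReal_ne_top hθtop.ne).mpr hθ
      rwa [ENNReal.toReal_ofReal (by positivity)] at this
    have hεθ : e ≤ θ := by
      rw [he, ← ENNReal.ofReal_toReal hθtop.ne]
      apply ofReal_le_ofReal
      linarith
    constructor
    · -- μ C ≤ ν (thickening) + θ
      set T : Finset ℕ := P.filter (fun n => (C ∩ As n).Nonempty) with hT
      have step1 : toM μ C ≤ ∑ n ∈ Finset.range N, toM μ (C ∩ As n) + toM μ (B N)ᶜ := by
        have hsub : C ⊆ (⋃ n ∈ Finset.range N, C ∩ As n) ∪ (B N)ᶜ := by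
          intro x hx
          by_cases hxB : x ∈ B N
          · left
            obtain ⟨n, hn1, hn2⟩ := mem_iUnion₂.mp hxB
            exact mem_iUnion₂.mpr ⟨n, hn1, hx, hn2⟩
          · exact Or.inr hxB
        calc toM μ C ≤ toM μ ((⋃ n ∈ Finset.range N, C ∩ As n) ∪ (B N)ᶜ) := measure_mono hsub
          _ ≤ toM μ (⋃ n ∈ Finset.range N, C ∩ As n) + toM μ (B N)ᶜ := measure_union_le _ _
          _ ≤ ∑ n ∈ Finset.range N, toM μ (C ∩ As n) + toM μ (B N)ᶜ :=
              add_le_add_left (measure_biUnion_finset_le _ _) _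
      have step2 : ∑ n ∈ Finset.range N, toM μ (C ∩ As n) = ∑ n ∈ T, toM μ (C ∩ As n) := by
        apply (Finset.sum_subset ?_ ?_).symm
        · intro n hn
          exact Finset.filter_subset _ _ (Finset.filter_subset _ _ hn)
        · intro n hn1 hn2
          by_cases hne : (C ∩ As n).Nonempty
          · exfalso
            apply hn2
            rw [hT, Finset.mem_filter]
            refine ⟨Finset.mem_filter.mpr ⟨hn1, hne.mono inter_subset_right⟩, hne⟩
          · rw [not_nonempty_iff_eq_empty.mp hne, measure_empty]
      have step3 : ∑ n ∈ T, toM μ (C ∩ As n) ≤ ∑ n ∈ T, ENNReal.ofReal (q n) :=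
        Finset.sum_le_sum fun n hn =>
          (measure_mono inter_subset_right).trans (hq_le n (Finset.mem_of_mem_filter n hn))
      have step4 : ∑ n ∈ T, ENNReal.ofReal (q n) ≤ ν (thickening θ.toReal C) := by
        rw [hνB _ isOpen_thickening.measurableSet]
        have hmem : ∀ n ∈ T, xs (k n) ∈ thickening θ.toReal C := by
          intro n hn
          have hnP : n ∈ P := Finset.mem_of_mem_filter n hn
          have hne : (As n).Nonempty := (Finset.mem_filter.mp hnP).2
          obtain ⟨b, hbC, hbA⟩ := (Finset.mem_filter.mp hn).2
          obtain ⟨⟨a, haA, hak⟩, _, _⟩ := hqP n hne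
          rw [Metric.mem_thickening_iff]
          refine ⟨b, hbC, ?_⟩
          calc dist (xs (k n)) b ≤ dist (xs (k n)) a + dist a b := dist_triangle _ _ _
            _ ≤ ε' + ε' := by
                apply add_le_add
                · rw [dist_comm]; exact hak.le
                · exact (dist_le_diam_of_mem (As_bdd n) haA hbA).trans (As_diam n)
            _ = 2 * ε' := by ring
            _ < θ.toReal := hθR
        calc ∑ n ∈ T, ENNReal.ofReal (q n)
            = ∑ n ∈ T, ENNReal.ofReal (q n) * ((thickening θ.toReal C).indicator 1 (xs (k n))) := by
              refine Finset.sum_congr rfl fun n hn => ?_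
              rw [indicator_of_mem (hmem n hn)]
              simp
          _ ≤ ∑ n ∈ P, ENNReal.ofReal (q n) * ((thickening θ.toReal C).indicator 1 (xs (k n))) :=
              Finset.sum_le_sum_of_subset (Finset.filter_subset _ _)
      calc toM μ C ≤ ∑ n ∈ Finset.range N, toM μ (C ∩ As n) + toM μ (B N)ᶜ := step1
        _ = ∑ n ∈ T, toM μ (C ∩ As n) + toM μ (B N)ᶜ := by rw [step2]
        _ ≤ ν (thickening θ.toReal C) + θ := by
            apply add_le_add (step3.trans step4) (hN.le.trans hεθ)
    · -- ν C ≤ μ (thickening) + θ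
      rw [hνB C hC]
      set T' : Finset ℕ := P.filter (fun n => xs (k n) ∈ C) with hT'
      have e1 : ∑ n ∈ P, ENNReal.ofReal (q n) * (C.indicator 1 (xs (k n)))
          = ∑ n ∈ T', ENNReal.ofReal (q n) := by
        trans (∑ n ∈ P, if xs (k n) ∈ C then ENNReal.ofReal (q n) else 0)
        · refine Finset.sum_congr rfl fun n _ => ?_
          by_cases h : xs (k n) ∈ C
          · simp [h]
          · simp [h]
        · exact (Finset.sum_filter _ _).symm
      have e2 : ∑ n ∈ T', ENNReal.ofReal (q n)
          ≤ ∑ n ∈ T', (toM μ (As n) + ENNReal.ofReal cN) := by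
        refine Finset.sum_le_sum fun n hn => ?_
        have hnP : n ∈ P := Finset.mem_of_mem_filter n hn
        have hne : (As n).Nonempty := (Finset.mem_filter.mp hnP).2
        have hq2 := (hqP n hne).2.2
        calc ENNReal.ofReal (q n) ≤ ENNReal.ofReal ((toM μ (As n)).toReal + cN) :=
              ofReal_le_ofReal hq2.le
          _ = ENNReal.ofReal (toM μ (As n)).toReal + ENNReal.ofReal cN :=
              ofReal_add ENNReal.toReal_nonneg hcN0.le
          _ = toM μ (As n) + ENNReal.ofReal cN := by rw [ofReal_toReal (measure_ne_top _ _)]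
      have e3 : ∑ n ∈ T', (toM μ (As n) + ENNReal.ofReal cN)
          = ∑ n ∈ T', toM μ (As n) + T'.card • ENNReal.ofReal cN := by
        rw [Finset.sum_add_distrib, Finset.sum_const]
      have e4 : ∑ n ∈ T', toM μ (As n) ≤ toM μ (thickening θ.toReal C) := by
        rw [← measure_biUnion_finset ?_ (fun n _ => As_mble n)]
        · apply measure_mono
          apply iUnion₂_subset
          intro n hn
          intro x hx
          have hnP : n ∈ P := Finset.mem_of_mem_filter n hn
          have hne : (As n).Nonempty := (Finset.mem_filter.mp hnP).2
          obtain ⟨⟨a, haA, hak⟩, _, _⟩ := hqP n hne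
          rw [Metric.mem_thickening_iff]
          refine ⟨xs (k n), (Finset.mem_filter.mp hn).2, ?_⟩
          calc dist x (xs (k n)) ≤ dist x a + dist a (xs (k n)) := dist_triangle _ _ _
            _ ≤ ε' + ε' := add_le_add
                ((dist_le_diam_of_mem (As_bdd n) hx haA).trans (As_diam n)) hak.le
            _ = 2 * ε' := by ring
            _ < θ.toReal := hθR
        · intro i _ j _ hij
          exact As_disj hij
      have e5 : T'.card • ENNReal.ofReal cN ≤ e := by
        rw [nsmul_eq_mul, ← ENNReal.ofReal_natCast, ← ENNReal.ofReal_mul (Nat.cast_nonneg _)]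
        apply ofReal_le_ofReal
        have hcard : (T'.card : ℝ) ≤ N := by
          have : T'.card ≤ N := le_trans (Finset.card_filter_le _ _)
            (le_trans (Finset.card_filter_le _ _) (by simp))
          exact_mod_cast this
        calc (T'.card : ℝ) * cN ≤ N * cN := by
              apply mul_le_mul_of_nonneg_right hcard hcN0.le
          _ = ε' * ((N : ℝ) / (N + 1)) := by rw [hcN]; ring
          _ ≤ ε' * 1 := by
              apply mul_le_mul_of_nonneg_left _ hε'.le
              rw [div_le_one (by positivity)]
              linarith
          _ = ε' := mul_one _
      calc ∑ n ∈ P, ENNReal.ofReal (q n) * (C.indicator 1 (xs (k n)))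
          = ∑ n ∈ T', ENNReal.ofReal (q n) := e1
        _ ≤ ∑ n ∈ T', (toM μ (As n) + ENNReal.ofReal cN) := e2
        _ = ∑ n ∈ T', toM μ (As n) + T'.card • ENNReal.ofReal cN := e3
        _ ≤ toM μ (thickening θ.toReal C) + θ :=
            add_le_add e4 ((e5.trans hεθ))
  refine ⟨fs, ?_⟩
  have hdist : dist μ (ratLP xs fs) = (levyProkhorovEDist (toM μ) (toM (ratLP xs fs))).toReal := rfl
  rw [hdist, toM_ratLP]
  calc (levyProkhorovEDist (toM μ) (ratMeas xs fs)).toReal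
      ≤ (ENNReal.ofReal (2 * ε')).toReal := ENNReal.toReal_mono ofReal_ne_top main
    _ = 2 * ε' := ENNReal.toReal_ofReal (by positivity)
    _ < ε := by rw [hε'def]; linarith

end LPAux
end T5
section T6
open MeasureTheory Topology Metric Filter Set ENNReal NNReal
namespace LPAux
variable {S : Type*} [MetricSpace S] [MeasurableSpace S] [BorelSpace S]

lemma borel_le_evalSigma [SecondCountableTopology S] :
    borel (LevyProkhorov (FiniteMeasure S)) ≤ evalSigma S := by
  cases isEmpty_or_nonempty S with
  | inl h =>
    haveI : Subsingleton (FiniteMeasure S) :=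
      ⟨fun a b => Subtype.ext (Subsingleton.elim _ _)⟩
    haveI : Subsingleton (LevyProkhorov (FiniteMeasure S)) :=
      ⟨fun a b => LevyProkhorov.toMeasure_injective (Subsingleton.elim _ _)⟩
    intro s _
    show MeasurableSet[evalSigma S] s
    by_cases hs : s = ∅
    · rw [hs]; exact @MeasurableSet.empty _ (evalSigma S)
    · obtain ⟨x, hx⟩ := Set.nonempty_iff_ne_empty.mpr hs
      have : s = univ := by
        ext y
        simp only [mem_univ, iff_true]
        rwa [Subsingleton.elim y x]
      rw [this]
      exact @MeasurableSet.univ _ (evalSigma S)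
  | inr h =>
    obtain ⟨xs, hxs⟩ := TopologicalSpace.exists_dense_seq S
    apply MeasurableSpace.generateFrom_le
    intro U hU
    replace hU : IsOpen U := hU
    have hrep : U = ⋃ (p : Finset (ℕ × ℕ × ℚ) × ℚ)
        (_ : Metric.ball (ratLP xs p.1) (p.2 : ℝ) ⊆ U),
        Metric.ball (ratLP xs p.1) (p.2 : ℝ) := by
      apply subset_antisymm
      · intro x hx
        obtain ⟨r, hr, hball⟩ := Metric.isOpen_iff.mp hU x hx
        obtain ⟨fs, hfs⟩ := Metric.denseRange_iff.mp (denseRange_ratLP hxs) x (r/4) (by positivity)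
        obtain ⟨qq, hq1, hq2⟩ := exists_rat_btwn (show dist x (ratLP xs fs) < r/2 by linarith)
        have hsub : Metric.ball (ratLP xs fs) (qq : ℝ) ⊆ U := by
          intro y hy
          apply hball
          rw [Metric.mem_ball] at hy ⊢
          calc dist y x ≤ dist y (ratLP xs fs) + dist (ratLP xs fs) x := dist_triangle _ _ _
            _ < qq + qq := add_lt_add hy (by rw [dist_comm]; exact hq1)
            _ < r := by linarith
        exact mem_iUnion₂.mpr ⟨(fs, qq), hsub, Metric.mem_ball.mpr hq1⟩
      · exact iUnion₂_subset fun p hp => hp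
    rw [hrep]
    exact MeasurableSet.iUnion fun p => MeasurableSet.iUnion fun _ =>
      measurableSet_ball hxs (ratLP xs p.1) (p.2 : ℝ)

end LPAux
end T6

open MeasureTheory

/-- The σ-algebra on `M₊(S)` (finite non-negative Borel measures on a complete separable
metric space `S`) generated by the evaluation maps `μ ↦ μ A`, `A` Borel, coincides with the
Borel σ-algebra of the Lévy–Prokhorov metric. -/
theorem stmt_0 {S : Type*} [MetricSpace S] [CompleteSpace S] [SecondCountableTopology S]
    [MeasurableSpace S] [BorelSpace S] :
    borel (LevyProkhorov (FiniteMeasure S)) =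
      ⨆ (A : Set S) (_ : MeasurableSet A),
        MeasurableSpace.comap
          (fun μ : LevyProkhorov (FiniteMeasure S) =>
            (LevyProkhorov.toMeasureEquiv (α := FiniteMeasure S) μ) A) inferInstance := by
  exact le_antisymm LPAux.borel_le_evalSigma LPAux.evalSigma_le_borel
end

section
/- The set M_ℕ(S) of finite measures on S taking only values in the non-negative integers is closed in the space (M₊(S), π) of finite non-negative measures equipped with the Lévy–Prokhorov metric. -/
open MeasureTheory Metric Set ENNReal Topology

/-- A tsum of natural number casts in `ℝ≥0∞` which is finite is a natural number. -/
lemma aux_tsum_nat {ι : Type*} {f : ι → ℕ} (h : ∑' i, (f i : ℝ≥0∞) ≠ ⊤) :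
    ∃ n : ℕ, ∑' i, (f i : ℝ≥0∞) = n := by
  have hfin : {i | (1 : ℝ≥0∞) ≤ (f i : ℝ≥0∞)}.Finite :=
    ENNReal.finite_const_le_of_tsum_ne_top h one_ne_zero
  refine ⟨∑ i ∈ hfin.toFinset, f i, ?_⟩
  rw [tsum_eq_sum (s := hfin.toFinset) ?_]
  · push_cast
    rfl
  · intro i hi
    simp only [Set.Finite.mem_toFinset, Set.mem_setOf_eq, not_le] at hi
    have : (f i : ℝ≥0∞) = 0 := by
      rcases Nat.eq_zero_or_pos (f i) with h0 | h0
      · simp [h0]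
      · exact absurd (by exact_mod_cast Nat.one_le_iff_ne_zero.mpr h0.ne') hi.not_ge
    exact this

/-- If a finite measure can be approximated arbitrarily well in the Lévy–Prokhorov distance
by integer-valued measures, then its value on every closed set is a natural number. -/
lemma aux_closed_int {S : Type*} [MetricSpace S] [MeasurableSpace S] [BorelSpace S]
    (μ : Measure S) [IsFiniteMeasure μ]
    (hμ : ∀ ε : ℝ, 0 < ε → ∃ ν : Measure S, IsFiniteMeasure ν ∧
      (∀ A : Set S, MeasurableSet A → ∃ n : ℕ, ν A = n) ∧
      levyProkhorovEDist μ ν < ENNReal.ofReal ε)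
    {F : Set S} (hF : IsClosed F) : ∃ n : ℕ, μ F = n := by
  -- It suffices to approximate `(μ F).toReal` by naturals.
  have key : ∀ δ : ℝ, 0 < δ → ∃ n : ℕ, |(μ F).toReal - n| ≤ 2 * δ := by
    intro δ hδ
    -- find r with 0 < r < δ and μ (thickening r F) < μ F + ofReal δ
    have hten := tendsto_measure_thickening_of_isClosed
      (μ := μ) (s := F) ⟨1, one_pos, measure_ne_top μ _⟩ hF
    have h1 : ∀ᶠ r in 𝓝[>] (0:ℝ), μ (thickening r F) < μ F + ENNReal.ofReal δ := by
      apply hten.eventually_lt_const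
      exact ENNReal.lt_add_right (measure_ne_top μ _) (by simp [hδ])
    have h2 : ∀ᶠ r in 𝓝[>] (0:ℝ), r < δ :=
      eventually_nhdsWithin_of_eventually_nhds (eventually_lt_nhds hδ)
    have h3 : ∀ᶠ r in 𝓝[>] (0:ℝ), 0 < r := eventually_mem_nhdsWithin
    obtain ⟨r, hr1, hr2, hr0⟩ := (h1.and (h2.and h3)).exists
    set ε : ℝ := r / 2 with hε
    have hε0 : 0 < ε := by positivity
    obtain ⟨ν, hνfin, hνint, hνd⟩ := hμ ε hε0
    have hc : (ENNReal.ofReal ε).toReal = ε := ENNReal.toReal_ofReal hε0.le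
    -- the thickening of F is open hence measurable
    have hAm : MeasurableSet (thickening ε F) := isOpen_thickening.measurableSet
    obtain ⟨n, hn⟩ := hνint (thickening ε F) hAm
    refine ⟨n, ?_⟩
    -- lower bound : μ F ≤ n + ofReal ε
    have hlow : μ F ≤ (n : ℝ≥0∞) + ENNReal.ofReal ε := by
      have := left_measure_le_of_levyProkhorovEDist_lt hνd (B := F) hF.measurableSet
      rwa [hc, hn] at this
    -- upper bound : n ≤ μ F + ofReal δ + ofReal ε
    have hup : (n : ℝ≥0∞) ≤ μ F + ENNReal.ofReal δ + ENNReal.ofReal ε := by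
      have h4 := right_measure_le_of_levyProkhorovEDist_lt hνd (B := thickening ε F) hAm
      rw [hc, hn] at h4
      refine h4.trans ?_
      have hsub : thickening ε (thickening ε F) ⊆ thickening r F := by
        refine (thickening_thickening_subset ε ε F).trans ?_
        have hr : ε + ε = r := by rw [hε]; ring
        rw [hr]
      gcongr
      exact (measure_mono hsub).trans hr1.le
    -- convert to reals
    have hμFt : μ F ≠ ⊤ := measure_ne_top μ F
    have hlowR : (μ F).toReal ≤ n + ε := by
      have := ENNReal.toReal_mono (by finiteness) hlow
      rw [ENNReal.toReal_add (by simp) (by simp), ENNReal.toReal_ofReal hε0.le] at this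
      simpa using this
    have hupR : (n : ℝ) ≤ (μ F).toReal + δ + ε := by
      have := ENNReal.toReal_mono (by finiteness) hup
      rw [ENNReal.toReal_add, ENNReal.toReal_add, ENNReal.toReal_ofReal hδ.le,
        ENNReal.toReal_ofReal hε0.le] at this
      · simpa using this
      · finiteness
      · finiteness
      · finiteness
      · finiteness
    have hεδ : ε < δ := by
      rw [hε]; linarith
    rw [abs_le]
    constructor <;> nlinarith
  -- conclude using closedness of ℕ in ℝ
  have hcl : (μ F).toReal ∈ closure (Set.range ((↑) : ℕ → ℝ)) := by
    rw [Metric.mem_closure_iff]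
    intro ε hε
    obtain ⟨n, hn⟩ := key (ε / 3) (by positivity)
    exact ⟨n, ⟨n, rfl⟩, by rw [Real.dist_eq]; linarith⟩
  rw [Nat.isClosedEmbedding_coe_real.isClosed_range.closure_eq] at hcl
  obtain ⟨n, hn⟩ := hcl
  exact ⟨n, by rw [← ENNReal.ofReal_toReal (measure_ne_top μ F), ← hn]; simp⟩

/-- The set `M_ℕ(S)` of finite measures taking only non-negative integer values is closed
in the space of finite non-negative measures with the Lévy–Prokhorov metric. -/
theorem stmt_2 {S : Type*} [MetricSpace S] [CompleteSpace S] [SecondCountableTopology S]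
    [MeasurableSpace S] [BorelSpace S] :
    IsClosed {μ : LevyProkhorov (FiniteMeasure S) |
      ∀ A : Set S, MeasurableSet A →
        ∃ n : ℕ, (LevyProkhorov.toMeasureEquiv (α := FiniteMeasure S) μ) A = n} := by
  apply isClosed_of_closure_subset
  intro μ hμ
  set μ' : FiniteMeasure S := LevyProkhorov.toMeasureEquiv (α := FiniteMeasure S) μ with hμ'
  -- approximation hypothesis in terms of measures
  have happrox : ∀ ε : ℝ, 0 < ε → ∃ ν : Measure S, IsFiniteMeasure ν ∧
      (∀ A : Set S, MeasurableSet A → ∃ n : ℕ, ν A = n) ∧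
      levyProkhorovEDist μ'.toMeasure ν < ENNReal.ofReal ε := by
    intro ε hε
    rw [Metric.mem_closure_iff] at hμ
    obtain ⟨ν, hνs, hνd⟩ := hμ ε hε
    refine ⟨(LevyProkhorov.toMeasureEquiv (α := FiniteMeasure S) ν).toMeasure, inferInstance, ?_, ?_⟩
    · intro A hA
      obtain ⟨n, hn⟩ := hνs A hA
      refine ⟨n, ?_⟩
      rw [← FiniteMeasure.ennreal_coeFn_eq_coeFn_toMeasure, hn]
      simp
    · have hdist : dist μ ν =
          levyProkhorovDist μ'.toMeasure (LevyProkhorov.toMeasureEquiv (α := FiniteMeasure S) ν).toMeasure :=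
        rfl
      rw [hdist, levyProkhorovDist] at hνd
      exact (ENNReal.lt_ofReal_iff_toReal_lt (levyProkhorovEDist_ne_top _ _)).mpr hνd
  -- every closed set has natural-number measure
  have hclosed : ∀ F : Set S, IsClosed F → ∃ n : ℕ, μ'.toMeasure F = n :=
    fun F hF => aux_closed_int μ'.toMeasure happrox hF
  -- now extend to all measurable sets via Dynkin's π-λ theorem
  have hmeas : ∀ A : Set S, MeasurableSet A → ∃ n : ℕ, μ'.toMeasure A = n := by
    have h_eq : (inferInstance : MeasurableSpace S) =
        MeasurableSpace.generateFrom {s : Set S | IsClosed s} :=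
      BorelSpace.measurable_eq.trans borel_eq_generateFrom_isClosed
    intro A hA
    refine MeasurableSpace.induction_on_inter (C := fun t _ => ∃ n : ℕ, μ'.toMeasure t = n)
      h_eq isPiSystem_isClosed ⟨0, by simp⟩ (fun t ht => hclosed t ht) ?_ ?_ A hA
    · intro t htm iht
      obtain ⟨m, hm⟩ := iht
      obtain ⟨N, hN⟩ := hclosed Set.univ isClosed_univ
      refine ⟨N - m, ?_⟩
      rw [measure_compl htm (measure_ne_top _ _), hm, hN, ENNReal.natCast_sub]
    · intro f hdisj hfm ihf
      choose g hg using ihf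
      have : μ'.toMeasure (⋃ i, f i) = ∑' i, ((g i : ℝ≥0∞)) := by
        rw [measure_iUnion hdisj hfm]
        exact tsum_congr hg
      rw [this]
      exact aux_tsum_nat (by rw [← this]; exact measure_ne_top _ _)
  intro A hA
  obtain ⟨n, hn⟩ := hmeas A hA
  refine ⟨n, ?_⟩
  have := FiniteMeasure.ennreal_coeFn_eq_coeFn_toMeasure μ' A
  rw [hn] at this
  exact_mod_cast this
end

section
/- Let (S,𝒮) be a Polish space and Sₙ ∈ 𝒮 with Sₙ ↑ S. Then the space M_{ℕ̄}({Sₙ}) of ℕ∪{∞}-valued measures θ on 𝒮 satisfying θ(Sₙ) < ∞ for all n, equipped with the σ-algebra generated by the evaluation maps μ ↦ μ(B), B ∈ 𝒮, is a Polish (standard Borel) measurable space: there is a complete separable metric ρ on M_{ℕ̄}({Sₙ}) whose Borel σ-algebra equals this σ-algebra. -/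
open MeasureTheory

/-- The family of `ℕ∪{∞}`-valued measures on a Polish space `S` which are finite on each
member of an increasing family `Sₙ ↑ S`. -/
def MbarN {S : Type*} [MeasurableSpace S] (Sn : ℕ → Set S) :=
  {μ : Measure S // (∀ A : Set S, MeasurableSet A → μ A = ⊤ ∨ ∃ k : ℕ, μ A = k) ∧
    ∀ n, μ (Sn n) < ⊤}


section AuxiliaryForStmt3

open MeasureTheory Set
open scoped ENNReal

set_option linter.unusedSectionVars false
set_option linter.unusedVariables false


lemma tsum_nat_or_top {ι : Type*} [Countable ι] (a : ι → ℝ≥0∞)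
    (h : ∀ p, ∃ m : ℕ, a p = m) : (∑' p, a p) = ⊤ ∨ ∃ m : ℕ, (∑' p, a p) = m := by
  by_cases htop : (∑' p, a p) = ⊤
  · exact Or.inl htop
  right
  have hsum : (∑' p, a p) = ⨆ s : Finset ι, ∑ p ∈ s, a p := ENNReal.tsum_eq_iSup_sum
  have hnat : ∀ s : Finset ι, ∃ n : ℕ, (∑ p ∈ s, a p) = n := by
    intro s
    classical
    choose m hm using h
    exact ⟨∑ p ∈ s, m p, by rw [Nat.cast_sum]; exact Finset.sum_congr rfl fun p _ => hm p⟩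
  set N : Set ℕ := {n | ∃ s : Finset ι, (∑ p ∈ s, a p) = n} with hN
  have hne : N.Nonempty := ⟨0, ∅, by simp⟩
  obtain ⟨M, hM⟩ := ENNReal.exists_nat_gt htop
  have hbdd : BddAbove N := by
    refine ⟨M, fun n hn => ?_⟩
    obtain ⟨s, hs⟩ := hn
    have h1 : (n : ℝ≥0∞) ≤ ∑' p, a p := hs ▸ ENNReal.sum_le_tsum s
    exact_mod_cast (h1.trans_lt hM).le
  obtain ⟨s₀, hs₀⟩ := Nat.sSup_mem hne hbdd
  refine ⟨sSup N, le_antisymm ?_ ?_⟩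
  · rw [hsum]
    refine iSup_le fun s => ?_
    obtain ⟨n, hn⟩ := hnat s
    rw [hn]
    exact_mod_cast Nat.cast_le.mpr (le_csSup hbdd ⟨s, hn⟩)
  · exact hs₀ ▸ ENNReal.sum_le_tsum s₀


lemma standardBorel_of_equiv {α β : Type*} [MeasurableSpace α] [MeasurableSpace β]
    [StandardBorelSpace β] (e : α ≃ᵐ β) : StandardBorelSpace α := by
  letI := upgradeStandardBorel β
  letI τ : TopologicalSpace α := TopologicalSpace.induced e inferInstance
  have hind : Topology.IsInducing (e : α → β) := ⟨rfl⟩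
  let h : α ≃ₜ β := e.toEquiv.toHomeomorphOfIsInducing hind
  have hpol : PolishSpace α := h.isClosedEmbedding.polishSpace
  have hcomap : (inferInstance : MeasurableSpace α)
      = MeasurableSpace.comap e (inferInstance : MeasurableSpace β) := by
    refine le_antisymm ?_ e.measurable.comap_le
    intro A hA
    exact ⟨e.symm ⁻¹' A, e.symm.measurable hA, by ext x; simp⟩
  have hb : BorelSpace α := by
    constructor
    exact hcomap.trans ((congrArg (MeasurableSpace.comap e)
      (eq_borel_upgradeStandardBorel β)).trans borel_comap.symm)
  exact ⟨⟨τ, hb, hpol⟩⟩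

lemma aux_metric (X : Type*) [m0 : MeasurableSpace X] [h : StandardBorelSpace X] :
    ∃ m : MetricSpace X, @CompleteSpace X m.toUniformSpace ∧
      @TopologicalSpace.SeparableSpace X m.toUniformSpace.toTopologicalSpace ∧
      @borel X m.toUniformSpace.toTopologicalSpace = m0 := by
  letI := upgradeStandardBorel X
  letI m := TopologicalSpace.completelyMetrizableMetric X
  refine ⟨m, TopologicalSpace.complete_completelyMetrizableMetric X, ?_, ?_⟩
  · exact TopologicalSpace.SecondCountableTopology.to_separableSpace
  · exact (eq_borel_upgradeStandardBorel X).symm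


lemma measurable_qtl {X : Type*} [MeasurableSpace X] (F : X → ℝ → ℝ≥0∞)
    (hmono : ∀ x, Monotone (F x)) (hmeas : ∀ t : ℝ, Measurable fun x => F x t)
    (c : ℝ≥0∞) : Measurable (fun x => sInf {t | c ≤ F x t}) := by
  apply measurable_of_Iic
  intro a
  have hup : ∀ x t, c ≤ F x t → ∀ s, t ≤ s → c ≤ F x s :=
    fun x t ht s hts => ht.trans (hmono x hts)
  have key : (fun x => sInf {t | c ≤ F x t}) ⁻¹' Iic a =
      ({x | (¬ ∃ r : ℚ, c ≤ F x r) ∨ (¬ ∃ r : ℚ, ¬ c ≤ F x r)} ∩ {_x : X | 0 ≤ a}) ∪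
      ({x | ∃ r : ℚ, c ≤ F x r} ∩ {x | ∃ r : ℚ, ¬ c ≤ F x r} ∩
        ⋂ r : ℚ, {x | a < (r : ℝ) → c ≤ F x r}) := by
    ext x
    simp only [mem_preimage, mem_Iic, mem_union, mem_inter_iff, mem_iInter, mem_setOf_eq]
    by_cases h1 : ∃ r : ℚ, c ≤ F x r
    · by_cases h2 : ∃ r : ℚ, ¬ c ≤ F x r
      · obtain ⟨r₀, hr₀⟩ := h1
        obtain ⟨r₁, hr₁⟩ := h2
        have hne : Set.Nonempty {t | c ≤ F x t} := ⟨r₀, hr₀⟩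
        have hbdd : BddBelow {t | c ≤ F x t} := by
          refine ⟨r₁, fun t ht => ?_⟩
          by_contra hlt
          exact hr₁ (hup x t ht r₁ (not_le.mp hlt).le)
        constructor
        · intro hle
          refine Or.inr ⟨⟨⟨r₀, hr₀⟩, ⟨r₁, hr₁⟩⟩, fun r har => ?_⟩
          obtain ⟨t, ht, htr⟩ := exists_lt_of_csInf_lt hne (lt_of_le_of_lt hle har)
          exact hup x t ht r htr.le
        · rintro (⟨h, _⟩ | ⟨⟨_, _⟩, h⟩)
          · rcases h with h | h
            · exact absurd ⟨r₀, hr₀⟩ h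
            · exact absurd ⟨r₁, hr₁⟩ h
          · refine le_of_forall_pos_le_add fun ε hε => ?_
            obtain ⟨q, hq1, hq2⟩ := exists_rat_btwn (lt_add_of_pos_right a hε)
            exact (csInf_le hbdd (h q hq1)).trans hq2.le
      · -- all rationals satisfy the bound: T = univ, sInf = 0
        push_neg at h2
        have hT : {t | c ≤ F x t} = univ := by
          ext t
          simp only [mem_setOf_eq, mem_univ, iff_true]
          obtain ⟨q, hq⟩ := exists_rat_lt t
          exact hup x q (h2 q) t hq.le
        have hnb : ¬ BddBelow {t : ℝ | c ≤ F x t} := by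
          rw [hT]
          exact fun ⟨b, hb⟩ => absurd (hb (mem_univ (b - 1))) (by simp)
        rw [csInf_of_not_bddBelow hnb, Real.sInf_empty]
        constructor
        · intro h0
          exact Or.inl ⟨Or.inr (by push_neg; exact h2), h0⟩
        · rintro (⟨_, h0⟩ | ⟨⟨_, ⟨r, hr⟩⟩, _⟩)
          · exact h0
          · exact absurd (h2 r) hr
    · -- T = ∅
      have hT : {t : ℝ | c ≤ F x t} = ∅ := by
        ext t
        simp only [mem_setOf_eq, mem_empty_iff_false, iff_false]
        intro ht
        obtain ⟨q, hq⟩ := exists_rat_gt t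
        exact h1 ⟨q, hup x t ht q hq.le⟩
      rw [hT, Real.sInf_empty]
      constructor
      · intro h0
        exact Or.inl ⟨Or.inl h1, h0⟩
      · rintro (⟨_, h0⟩ | ⟨⟨⟨r, hr⟩, _⟩, _⟩)
        · exact h0
        · exact absurd ⟨r, hr⟩ h1
  rw [key]
  have hm1 : ∀ r : ℚ, MeasurableSet {x | c ≤ F x (r : ℝ)} :=
    fun r => (hmeas (r : ℝ)) measurableSet_Ici
  have hA : MeasurableSet {x : X | ∃ r : ℚ, c ≤ F x r} := by
    rw [setOf_exists]
    exact MeasurableSet.iUnion fun r => hm1 r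
  have hB : MeasurableSet {x : X | ∃ r : ℚ, ¬ c ≤ F x r} := by
    rw [setOf_exists]
    exact MeasurableSet.iUnion fun r => (hm1 r).compl
  refine MeasurableSet.union (MeasurableSet.inter ?_ (MeasurableSet.const _))
    (MeasurableSet.inter (hA.inter hB) (MeasurableSet.iInter fun r => ?_))
  · rw [setOf_or]
    exact MeasurableSet.union hA.compl hB.compl
  · by_cases har : a < (r : ℝ)
    · simp only [har, true_implies]
      exact hm1 r
    · simp only [har, false_implies, setOf_true]
      exact MeasurableSet.univ


/-- Quantile of a measure on `ℝ`. -/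
noncomputable def qtl (μ : Measure ℝ) (i : ℕ) : ℝ :=
  sInf {t | (i : ℝ≥0∞) + 1 ≤ μ (Set.Iic t)}

/-- A finite `ℕ`-valued measure on `ℝ` is the sum of Dirac masses at its quantiles. -/
lemma measure_eq_sum_dirac_qtl (μ : Measure ℝ) (k : ℕ) (hk : μ Set.univ = k)
    (hnat : ∀ B : Set ℝ, MeasurableSet B → ∃ m : ℕ, μ B = m) :
    μ = ∑ i ∈ Finset.range k, Measure.dirac (qtl μ i) := by
  have hfin : IsFiniteMeasure μ := ⟨by rw [hk]; exact ENNReal.natCast_lt_top k⟩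
  set F : ℝ → ℝ≥0∞ := fun t => μ (Set.Iic t) with hF
  have hmono : Monotone F := fun s t hst => measure_mono (Iic_subset_Iic.mpr hst)
  have hFk : ∀ t, F t ≤ k := fun t => hk ▸ measure_mono (subset_univ _)
  have hFnat : ∀ t, ∃ m : ℕ, F t = m := fun t => hnat _ measurableSet_Iic
  -- nonemptiness of the quantile sets
  have hsup : ∀ i : ℕ, i < k → ∃ t : ℝ, (i : ℝ≥0∞) + 1 ≤ F t := by
    intro i hik
    have hU : (⋃ n : ℕ, Set.Iic (n : ℝ)) = univ := by
      ext t; simp only [mem_iUnion, mem_Iic, mem_univ, iff_true]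
      obtain ⟨n, hn⟩ := exists_nat_gt t
      exact ⟨n, hn.le⟩
    have htend : Filter.Tendsto (fun n : ℕ => F (n : ℝ)) Filter.atTop (nhds (k : ℝ≥0∞)) := by
      have := tendsto_measure_iUnion_atTop (μ := μ)
        (s := fun n : ℕ => Set.Iic (n : ℝ))
        (fun n m hnm => Iic_subset_Iic.mpr (by exact_mod_cast hnm))
      rwa [hU, hk] at this
    have hik' : (i : ℝ≥0∞) < k := by exact_mod_cast hik
    obtain ⟨n, hn⟩ := ((htend.eventually (eventually_gt_nhds hik')).exists)
    obtain ⟨m, hm⟩ := hFnat (n : ℝ)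
    rw [hm] at hn
    have him : i < m := by exact_mod_cast hn
    refine ⟨n, ?_⟩
    rw [hm]
    exact_mod_cast (by exact_mod_cast him : ((i + 1 : ℕ) : ℝ≥0∞) ≤ (m : ℝ≥0∞))
  -- lower boundedness
  have hbdd : ∀ i : ℕ, BddBelow {t | (i : ℝ≥0∞) + 1 ≤ F t} := by
    intro i
    have hI : (⋂ n : ℕ, Set.Iic (-(n : ℝ))) = ∅ := by
      ext t; simp only [mem_iInter, mem_Iic, mem_empty_iff_false, iff_false, not_forall, not_le]
      obtain ⟨n, hn⟩ := exists_nat_gt (-t)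
      exact ⟨n, by linarith⟩
    have htend : Filter.Tendsto (fun n : ℕ => F (-(n : ℝ))) Filter.atTop (nhds 0) := by
      have := tendsto_measure_iInter_atTop (μ := μ)
        (s := fun n : ℕ => Set.Iic (-(n : ℝ)))
        (fun n => measurableSet_Iic.nullMeasurableSet)
        (fun n m hnm => Iic_subset_Iic.mpr (by exact_mod_cast neg_le_neg (by exact_mod_cast hnm)))
        ⟨0, measure_ne_top μ _⟩
      rwa [hI, measure_empty] at this
    obtain ⟨n, hn⟩ := (htend.eventually
      (eventually_lt_nhds (by norm_num : (0:ℝ≥0∞) < 1))).exists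
    refine ⟨-(n : ℝ), fun t ht => ?_⟩
    by_contra hlt
    push_neg at hlt
    have h1 : (1 : ℝ≥0∞) ≤ F t := le_trans (by simp) ht
    exact absurd (h1.trans (hmono hlt.le)) (not_le.mpr hn)
  -- the quantile is in the set
  have hx : ∀ i : ℕ, i < k → (i : ℝ≥0∞) + 1 ≤ F (qtl μ i) := by
    intro i hik
    have hne : Set.Nonempty {t | (i : ℝ≥0∞) + 1 ≤ F t} := hsup i hik
    have hmem : ∀ s, qtl μ i < s → (i : ℝ≥0∞) + 1 ≤ F s := by
      intro s hs
      obtain ⟨t, ht, hts⟩ := exists_lt_of_csInf_lt hne hs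
      exact le_trans ht (hmono hts.le)
    have hIic : Set.Iic (qtl μ i) = ⋂ n : ℕ, Set.Iic (qtl μ i + ((n : ℝ) + 1)⁻¹) := by
      ext t
      simp only [mem_iInter, mem_Iic]
      constructor
      · intro h n
        have : (0:ℝ) < (n : ℝ) + 1 := by positivity
        nlinarith [inv_pos.mpr this]
      · intro h
        by_contra hlt
        push_neg at hlt
        obtain ⟨n, hn⟩ := exists_nat_one_div_lt (by linarith : (0:ℝ) < t - qtl μ i)
        have := h n
        rw [one_div] at hn
        linarith
    have htend : Filter.Tendsto (fun n : ℕ => F (qtl μ i + ((n : ℝ) + 1)⁻¹)) Filter.atTop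
        (nhds (F (qtl μ i))) := by
      have := tendsto_measure_iInter_atTop (μ := μ)
        (s := fun n : ℕ => Set.Iic (qtl μ i + ((n : ℝ) + 1)⁻¹))
        (fun n => measurableSet_Iic.nullMeasurableSet)
        (fun n m hnm => Iic_subset_Iic.mpr (by
          have : ((m : ℝ) + 1)⁻¹ ≤ ((n : ℝ) + 1)⁻¹ := by
            apply inv_anti₀ (by positivity)
            exact_mod_cast add_le_add_left (Nat.cast_le.mpr hnm) 1
          linarith))
        ⟨0, measure_ne_top μ _⟩
      rwa [← hIic] at this
    refine ge_of_tendsto htend (Filter.Eventually.of_forall fun n => ?_)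
    exact hmem _ (lt_add_of_pos_right _ (by positivity))
  -- conclusion via ext_of_Iic
  refine Measure.ext_of_Iic μ _ fun t => ?_
  rw [Measure.finset_sum_apply]
  obtain ⟨m, hm⟩ := hFnat t
  have hmk : m ≤ k := by
    have := hFk t
    rw [hm] at this
    exact_mod_cast this
  have hcond : ∀ i : ℕ, i < k → (qtl μ i ≤ t ↔ i < m) := by
    intro i hik
    constructor
    · intro hle
      have : (i : ℝ≥0∞) + 1 ≤ F t := le_trans (hx i hik) (hmono hle)
      rw [hm] at this
      exact_mod_cast (by exact_mod_cast this : ((i + 1 : ℕ) : ℝ≥0∞) ≤ (m : ℝ≥0∞))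
    · intro him
      apply csInf_le (hbdd i)
      show (i : ℝ≥0∞) + 1 ≤ F t
      rw [hm]
      exact_mod_cast (by exact_mod_cast him : ((i + 1 : ℕ) : ℝ≥0∞) ≤ (m : ℝ≥0∞))
  calc F t = (m : ℝ≥0∞) := hm
    _ = ∑ i ∈ Finset.range k, Measure.dirac (qtl μ i) (Set.Iic t) := by
        have : ∀ i ∈ Finset.range k,
            Measure.dirac (qtl μ i) (Set.Iic t) = if i < m then 1 else 0 := by
          intro i hi
          rw [Measure.dirac_apply' _ measurableSet_Iic, Set.indicator_apply]
          simp only [mem_Iic, Pi.one_apply]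
          rw [if_congr (hcond i (Finset.mem_range.mp hi)) rfl rfl]
        rw [Finset.sum_congr rfl this]
        classical
        rw [Finset.sum_boole]
        have hfilt : (Finset.range k).filter (fun i => i < m) = Finset.range m := by
          ext i
          simp only [Finset.mem_filter, Finset.mem_range]
          omega
        rw [hfilt, Finset.card_range]

variable {S : Type*} [MeasurableSpace S]

noncomputable def recon (g : ℝ → S) (z : ℕ → ℕ × (ℕ → ℝ)) : Measure S :=
  Measure.sum (fun p : ℕ × ℕ =>
    if p.2 < (z p.1).1 then Measure.dirac (g ((z p.1).2 p.2)) else 0)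

lemma recon_apply (g : ℝ → S) (z : ℕ → ℕ × (ℕ → ℝ)) {B : Set S} (hB : MeasurableSet B) :
    recon g z B = ∑' (p : ℕ × ℕ),
      if p.2 < (z p.1).1 then B.indicator (1 : S → ℝ≥0∞) (g ((z p.1).2 p.2)) else 0 := by
  rw [recon, Measure.sum_apply _ hB]
  congr 1
  funext p
  rw [apply_ite (fun μ : Measure S => μ B), Measure.dirac_apply' _ hB]
  simp

lemma recon_coe_measurable {g : ℝ → S} (hg : Measurable g) {B : Set S} (hB : MeasurableSet B) :
    Measurable fun z : ℕ → ℕ × (ℕ → ℝ) => recon g z B := by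
  have : (fun z : ℕ → ℕ × (ℕ → ℝ) => recon g z B) = fun z => ∑' (p : ℕ × ℕ),
      if p.2 < (z p.1).1 then B.indicator (1 : S → ℝ≥0∞) (g ((z p.1).2 p.2)) else 0 := by
    funext z; exact recon_apply g z hB
  rw [this]
  apply Measurable.ennreal_tsum
  intro p
  apply Measurable.ite
  · exact (measurable_fst.comp (measurable_pi_apply p.1)) (MeasurableSet.of_discrete (s := {n : ℕ | p.2 < n}))
  · exact ((measurable_one.indicator hB).comp
      (hg.comp ((measurable_pi_apply p.2).comp
        (measurable_snd.comp (measurable_pi_apply p.1)))))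
  · exact measurable_const

lemma recon_measurable {g : ℝ → S} (hg : Measurable g) : Measurable (recon g) :=
  Measure.measurable_of_measurable_coe _ fun _ hB => recon_coe_measurable hg hB

lemma recon_nat (g : ℝ → S) (z : ℕ → ℕ × (ℕ → ℝ)) {B : Set S} (hB : MeasurableSet B) :
    recon g z B = ⊤ ∨ ∃ m : ℕ, recon g z B = m := by
  rw [recon_apply g z hB]
  apply tsum_nat_or_top
  intro p
  by_cases h : p.2 < (z p.1).1
  · rw [if_pos h]
    by_cases hmem : g ((z p.1).2 p.2) ∈ B
    · exact ⟨1, by simp [Set.indicator_apply, hmem]⟩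
    · exact ⟨0, by simp [Set.indicator_apply, hmem]⟩
  · exact ⟨0, by rw [if_neg h]; simp⟩

noncomputable def psiMap (f : S → ℝ) (D : ℕ → Set S) (θ : Measure S) : ℕ → ℕ × (ℕ → ℝ) :=
  fun n => (⌊(θ (D n)).toReal⌋₊, fun i => qtl (Measure.map f (θ.restrict (D n))) i)

lemma psiMap_measurable {f : S → ℝ} (hf : MeasurableEmbedding f) {D : ℕ → Set S}
    (hD : ∀ n, MeasurableSet (D n)) : Measurable (psiMap f D) := by
  have h1 : ∀ n, Measurable fun θ : Measure S => ⌊(θ (D n)).toReal⌋₊ :=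
    fun n => (Nat.measurable_floor.comp ENNReal.measurable_toReal).comp
      (Measure.measurable_coe (hD n))
  have h2 : ∀ n i, Measurable fun θ : Measure S =>
      qtl (Measure.map f (θ.restrict (D n))) i := by
    intro n i
    have heq : (fun θ : Measure S => qtl (Measure.map f (θ.restrict (D n))) i) =
        fun θ => sInf {t | (i : ℝ≥0∞) + 1 ≤ θ (f ⁻¹' Set.Iic t ∩ D n)} := by
      funext θ
      unfold qtl
      congr 1
      ext t
      simp only [mem_setOf_eq]
      rw [Measure.map_apply hf.measurable measurableSet_Iic,
        Measure.restrict_apply (hf.measurable measurableSet_Iic)]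
    rw [heq]
    exact measurable_qtl (fun (θ : Measure S) (t : ℝ) => θ (f ⁻¹' Set.Iic t ∩ D n))
      (fun θ s t hst => measure_mono
        (inter_subset_inter_left _ (preimage_mono (Iic_subset_Iic.mpr hst))))
      (fun t => Measure.measurable_coe ((hf.measurable measurableSet_Iic).inter (hD n)))
      ((i : ℝ≥0∞) + 1)
  apply measurable_pi_lambda
  intro n
  exact Measurable.prodMk (h1 n) (measurable_pi_lambda _ fun i => h2 n i)

lemma recon_psi {f : S → ℝ} (hf : MeasurableEmbedding f) {g : ℝ → S} (hg : Measurable g)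
    (hgf : ∀ x, g (f x) = x) {D : ℕ → Set S} (hD : ∀ n, MeasurableSet (D n))
    (hdisj : Pairwise (Function.onFun Disjoint D)) (hDU : (⋃ n, D n) = univ)
    (θ : Measure S) (hnat : ∀ A : Set S, MeasurableSet A → θ A = ⊤ ∨ ∃ m : ℕ, θ A = m)
    (hfin : ∀ n, θ (D n) < ⊤) :
    recon g (psiMap f D θ) = θ := by
  -- per-piece facts
  have hμapp : ∀ n, ∀ B : Set ℝ, MeasurableSet B →
      Measure.map f (θ.restrict (D n)) B = θ (f ⁻¹' B ∩ D n) := by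
    intro n B hB
    rw [Measure.map_apply hf.measurable hB, Measure.restrict_apply (hf.measurable hB)]
  have hμnat : ∀ n, ∀ B : Set ℝ, MeasurableSet B →
      ∃ m : ℕ, Measure.map f (θ.restrict (D n)) B = m := by
    intro n B hB
    rw [hμapp n B hB]
    rcases hnat _ ((hf.measurable hB).inter (hD n)) with h | h
    · exact absurd (h ▸ (measure_mono inter_subset_right).trans_lt (hfin n)) (by simp)
    · exact h
  have hθD : ∀ n, ∃ m : ℕ, θ (D n) = m := by
    intro n
    rcases hnat _ (hD n) with h | h
    · exact absurd (h ▸ hfin n) (by simp)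
    · exact h
  have hμk : ∀ n, Measure.map f (θ.restrict (D n)) univ = (⌊(θ (D n)).toReal⌋₊ : ℕ) := by
    intro n
    obtain ⟨m, hm⟩ := hθD n
    rw [hμapp n univ MeasurableSet.univ]
    rw [preimage_univ, univ_inter, hm]
    norm_num
  have hkey : ∀ n, Measure.map f (θ.restrict (D n)) =
      ∑ i ∈ Finset.range (⌊(θ (D n)).toReal⌋₊), Measure.dirac (qtl (Measure.map f (θ.restrict (D n))) i) :=
    fun n => measure_eq_sum_dirac_qtl _ _ (hμk n) (hμnat n)
  refine Measure.ext fun B hB => ?_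
  rw [recon_apply _ _ hB, ENNReal.tsum_prod']
  have hinner : ∀ n : ℕ, (∑' i : ℕ, if i < (psiMap f D θ n).1 then
      B.indicator (1 : S → ℝ≥0∞) (g ((psiMap f D θ n).2 i)) else 0) = θ (B ∩ D n) := by
    intro n
    set μn := Measure.map f (θ.restrict (D n)) with hμn
    set kn := ⌊(θ (D n)).toReal⌋₊ with hkn
    have h1 : (∑' i : ℕ, if i < (psiMap f D θ n).1 then
        B.indicator (1 : S → ℝ≥0∞) (g ((psiMap f D θ n).2 i)) else 0) =
        ∑ i ∈ Finset.range kn, B.indicator (1 : S → ℝ≥0∞) (g (qtl μn i)) := by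
      rw [tsum_eq_sum (s := Finset.range kn) ?_]
      · refine Finset.sum_congr rfl fun i hi => ?_
        rw [if_pos]
        · rfl
        · exact Finset.mem_range.mp hi
      · intro i hi
        rw [if_neg]
        exact fun h => hi (Finset.mem_range.mpr h)
    rw [h1]
    have h2 : ∀ i, B.indicator (1 : S → ℝ≥0∞) (g (qtl μn i)) =
        Measure.dirac (qtl μn i) (g ⁻¹' B) := by
      intro i
      rw [Measure.dirac_apply' _ (hg hB)]
      by_cases hmem : g (qtl μn i) ∈ B
      · rw [Set.indicator_of_mem hmem, Set.indicator_of_mem (mem_preimage.mpr hmem)]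
        rfl
      · rw [Set.indicator_of_notMem hmem,
          Set.indicator_of_notMem (fun h => hmem (mem_preimage.mp h))]
    rw [Finset.sum_congr rfl fun i _ => h2 i, ← Measure.finset_sum_apply, ← hkey n,
      hμapp n _ (hg hB)]
    congr 1
    have : f ⁻¹' (g ⁻¹' B) = B := by
      ext x
      simp [mem_preimage, hgf x]
    rw [this]
  rw [tsum_congr hinner]
  have hBD : ∀ n, MeasurableSet (B ∩ D n) := fun n => hB.inter (hD n)
  rw [← measure_iUnion ?_ hBD]
  · rw [← inter_iUnion, hDU, inter_univ]
  · exact fun n m hnm => (hdisj hnm).mono (inter_subset_right) (inter_subset_right)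

section Assembly

variable {S : Type*} [TopologicalSpace S] [PolishSpace S] [MeasurableSpace S] [BorelSpace S]

theorem standardBorel_subtype (Sn : ℕ → Set S) (hmeas : ∀ n, MeasurableSet (Sn n))
    (hunion : ⋃ n, Sn n = Set.univ) :
    StandardBorelSpace {μ : Measure S // (∀ A : Set S, MeasurableSet A → μ A = ⊤ ∨ ∃ k : ℕ, μ A = k) ∧
      ∀ n, μ (Sn n) < ⊤} := by
  by_cases hS : Nonempty S
  · obtain ⟨s₀⟩ := hS
    obtain ⟨f, hf⟩ := exists_measurableEmbedding_real S
    set g : ℝ → S := Function.extend f id fun _ => s₀ with hgdef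
    have hg : Measurable g := hf.measurable_extend measurable_id measurable_const
    have hgf : ∀ x, g (f x) = x := fun x => hf.injective.extend_apply _ _ x
    set D : ℕ → Set S := disjointed Sn with hDdef
    have hD : ∀ n, MeasurableSet (D n) := MeasurableSet.disjointed hmeas
    have hdisj : Pairwise (Function.onFun Disjoint D) := disjoint_disjointed Sn
    have hDU : (⋃ n, D n) = univ := by rw [hDdef, iUnion_disjointed]; exact hunion
    have hDsub : ∀ n, D n ⊆ Sn n := disjointed_subset Sn
    set G : Set (ℕ → ℕ × (ℕ → ℝ)) :=
      {z | (∀ n, recon g z (Sn n) < ⊤) ∧ psiMap f D (recon g z) = z} with hGdef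
    have hrp : ∀ θ : {μ : Measure S // (∀ A : Set S, MeasurableSet A → μ A = ⊤ ∨ ∃ k : ℕ, μ A = k) ∧
        ∀ n, μ (Sn n) < ⊤}, recon g (psiMap f D θ.1) = θ.1 := by
      intro θ
      exact recon_psi hf hg hgf hD hdisj hDU θ.1 θ.2.1
        (fun n => lt_of_le_of_lt (measure_mono (hDsub n)) (θ.2.2 n))
    have hPsiG : ∀ θ : {μ : Measure S // (∀ A : Set S, MeasurableSet A → μ A = ⊤ ∨ ∃ k : ℕ, μ A = k) ∧
        ∀ n, μ (Sn n) < ⊤}, psiMap f D θ.1 ∈ G := by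
      intro θ
      refine ⟨fun n => ?_, ?_⟩
      · rw [hrp θ]; exact θ.2.2 n
      · rw [hrp θ]
    have hφ : Measurable fun z : ℕ → ℕ × (ℕ → ℝ) => psiMap f D (recon g z) :=
      (psiMap_measurable hf hD).comp (recon_measurable hg)
    have hG : MeasurableSet G := by
      rw [hGdef, setOf_and]
      apply MeasurableSet.inter
      · rw [setOf_forall]
        refine MeasurableSet.iInter fun n => ?_
        exact measurableSet_lt (recon_coe_measurable hg (hmeas n)) measurable_const
      · have heq : {z : ℕ → ℕ × (ℕ → ℝ) | psiMap f D (recon g z) = z} =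
            ⋂ n, ({z : ℕ → ℕ × (ℕ → ℝ) | (psiMap f D (recon g z) n).1 = (z n).1} ∩
              ⋂ i, {z : ℕ → ℕ × (ℕ → ℝ) | (psiMap f D (recon g z) n).2 i = (z n).2 i}) := by
          ext z
          simp only [mem_setOf_eq, mem_iInter, mem_inter_iff]
          constructor
          · intro h
            rw [h]
            exact fun n => ⟨rfl, fun i => rfl⟩
          · intro h
            funext n
            exact Prod.ext (h n).1 (funext fun i => (h n).2 i)
        rw [heq]
        refine MeasurableSet.iInter fun n => MeasurableSet.inter ?_
          (MeasurableSet.iInter fun i => ?_)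
        · exact measurableSet_eq_fun
            (measurable_fst.comp ((measurable_pi_apply n).comp hφ))
            (measurable_fst.comp (measurable_pi_apply n))
        · exact measurableSet_eq_fun
            ((measurable_pi_apply i).comp (measurable_snd.comp ((measurable_pi_apply n).comp hφ)))
            ((measurable_pi_apply i).comp (measurable_snd.comp (measurable_pi_apply n)))
    haveI hGstd : StandardBorelSpace {z : ℕ → ℕ × (ℕ → ℝ) // z ∈ G} := hG.standardBorel
    refine standardBorel_of_equiv
      (β := {z : ℕ → ℕ × (ℕ → ℝ) // z ∈ G})
      { toFun := fun θ => ⟨psiMap f D θ.1, hPsiG θ⟩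
        invFun := fun z => ⟨recon g z.1, fun A hA => recon_nat g z.1 hA, z.2.1⟩
        left_inv := fun θ => Subtype.ext (hrp θ)
        right_inv := fun z => Subtype.ext z.2.2
        measurable_toFun := Measurable.subtype_mk
          ((psiMap_measurable hf hD).comp measurable_subtype_coe)
        measurable_invFun := Measurable.subtype_mk
          ((recon_measurable hg).comp measurable_subtype_coe) }
  · haveI : IsEmpty S := not_nonempty_iff.mp hS
    haveI : Subsingleton {μ : Measure S // (∀ A : Set S, MeasurableSet A → μ A = ⊤ ∨ ∃ k : ℕ, μ A = k) ∧
        ∀ n, μ (Sn n) < ⊤} := ⟨fun a b => Subtype.ext (Subsingleton.elim a.1 b.1)⟩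
    haveI : DiscreteMeasurableSpace {μ : Measure S // (∀ A : Set S, MeasurableSet A → μ A = ⊤ ∨ ∃ k : ℕ, μ A = k) ∧
        ∀ n, μ (Sn n) < ⊤} := by
      constructor
      intro s
      rcases s.eq_empty_or_nonempty with rfl | ⟨x, hx⟩
      · exact MeasurableSet.empty
      · have : s = univ := eq_univ_of_forall fun y => Subsingleton.elim x y ▸ hx
        exact this ▸ MeasurableSet.univ
    infer_instance

end Assembly

section FinalAux

variable {S : Type*} [TopologicalSpace S] [PolishSpace S] [MeasurableSpace S] [BorelSpace S]

lemma sigma_eq (Sn : ℕ → Set S) :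
    (Subtype.instMeasurableSpace :
        MeasurableSpace {μ : Measure S // (∀ A : Set S, MeasurableSet A → μ A = ⊤ ∨ ∃ k : ℕ, μ A = k) ∧
          ∀ n, μ (Sn n) < ⊤}) =
      ⨆ (B : Set S) (_ : MeasurableSet B),
        MeasurableSpace.comap
          (fun μ : {μ : Measure S // (∀ A : Set S, MeasurableSet A → μ A = ⊤ ∨ ∃ k : ℕ, μ A = k) ∧
            ∀ n, μ (Sn n) < ⊤} => μ.1 B) inferInstance := by
  have h0 : (Subtype.instMeasurableSpace :
      MeasurableSpace {μ : Measure S // (∀ A : Set S, MeasurableSet A → μ A = ⊤ ∨ ∃ k : ℕ, μ A = k) ∧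
        ∀ n, μ (Sn n) < ⊤}) =
      MeasurableSpace.comap (Subtype.val)
        (⨆ (s : Set S) (_ : MeasurableSet s),
          MeasurableSpace.comap (fun μ : Measure S => μ s) (borel ℝ≥0∞)) := rfl
  rw [h0, MeasurableSpace.comap_iSup]
  congr 1
  funext B
  rw [MeasurableSpace.comap_iSup]
  congr 1
  funext hB
  rw [MeasurableSpace.comap_comp]
  rfl


end FinalAux

end AuxiliaryForStmt3

/-- `(M_{ℕ̄}({Sₙ}), 𝓜_{ℕ̄}({Sₙ}))` is a Polish measurable space: there is a complete separable
metric on it whose Borel σ-algebra is the σ-algebra generated by the evaluations `μ ↦ μ B`. -/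
theorem stmt_3 {S : Type*} [TopologicalSpace S] [PolishSpace S]
    [MeasurableSpace S] [BorelSpace S]
    (Sn : ℕ → Set S) (hmeas : ∀ n, MeasurableSet (Sn n)) (hmono : Monotone Sn)
    (hunion : ⋃ n, Sn n = Set.univ) :
    ∃ m : MetricSpace (MbarN Sn),
      @CompleteSpace (MbarN Sn) m.toPseudoMetricSpace.toUniformSpace ∧
      @TopologicalSpace.SeparableSpace (MbarN Sn)
        m.toPseudoMetricSpace.toUniformSpace.toTopologicalSpace ∧
      @borel (MbarN Sn) m.toPseudoMetricSpace.toUniformSpace.toTopologicalSpace =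
        ⨆ (B : Set S) (_ : MeasurableSet B),
          MeasurableSpace.comap (fun μ : MbarN Sn => μ.1 B) inferInstance := by
  haveI hSB := standardBorel_subtype Sn hmeas hunion
  obtain ⟨m, hc, hsep, hb⟩ := aux_metric
    {μ : Measure S // (∀ A : Set S, MeasurableSet A → μ A = ⊤ ∨ ∃ k : ℕ, μ A = k) ∧
      ∀ n, μ (Sn n) < ⊤}
  exact ⟨m, hc, hsep, hb.trans (sigma_eq Sn)⟩
end

section
/- Given a Polish space S and sets Sₙ ↑ S with Sₙ closed, suppose μⱼ are ℕ̄-valued measures finite on each Sₙ and θₙ are finite measures with π(μⱼ(·∩Sₙ), θₙ) → 0 as j → ∞ for every n, where π is the Lévy–Prokhorov metric. If each Sₙ is clopen, then θₘ(·) = θ_k(·∩Sₘ) for m < k, the limit θ(A) = limₙ θₙ(A) defines a σ-additive ℕ̄-valued measure on S, and θₘ(·) = θ(·∩Sₘ). -/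
open MeasureTheory Filter
open scoped ENNReal NNReal

private lemma aux_le4 {a b : ℝ≥0∞} (hb : b ≠ ⊤)
    (h : ∀ δ : ℝ, 0 < δ → a ≤ b + 4 * ENNReal.ofReal δ) : a ≤ b := by
  refine ENNReal.le_of_forall_pos_le_add fun ε hε _ => ?_
  have h4 := h (ε / 4) (by positivity)
  refine h4.trans (add_le_add_right ?_ b)
  have : (4 : ℝ≥0∞) * ENNReal.ofReal ((ε : ℝ) / 4) = (ε : ℝ≥0∞) := by
    rw [show ((4 : ℝ≥0∞)) = ENNReal.ofReal (4 : ℝ) by simp,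
      ← ENNReal.ofReal_mul (by norm_num : (0:ℝ) ≤ 4),
      show (4 : ℝ) * ((ε : ℝ) / 4) = (ε : ℝ) by ring, ENNReal.ofReal_coe_nnreal]
  exact le_of_eq this

private lemma aux_nat_of_close {x : ℝ≥0∞} (hx : x ≠ ⊤)
    (h : ∀ δ : ℝ, 0 < δ → ∃ c : ℕ, x ≤ c + ENNReal.ofReal δ ∧ (c : ℝ≥0∞) ≤ x + ENNReal.ofReal δ) :
    ∃ c : ℕ, x = c := by
  have key : x.toReal ∈ closure (Set.range ((↑) : ℕ → ℝ)) := by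
    rw [Metric.mem_closure_iff]
    intro ε hε
    obtain ⟨c, h1, h2⟩ := h (ε / 2) (by positivity)
    refine ⟨c, ⟨c, rfl⟩, ?_⟩
    have hc : (c : ℝ≥0∞) ≠ ⊤ := ENNReal.natCast_ne_top c
    have e1 : x.toReal ≤ c + ε / 2 := by
      have := ENNReal.toReal_mono (ENNReal.add_ne_top.mpr ⟨hc, ENNReal.ofReal_ne_top⟩) h1
      rwa [ENNReal.toReal_add hc ENNReal.ofReal_ne_top, ENNReal.toReal_natCast,
        ENNReal.toReal_ofReal (by positivity)] at this
    have e2 : (c : ℝ) ≤ x.toReal + ε / 2 := by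
      have := ENNReal.toReal_mono (ENNReal.add_ne_top.mpr ⟨hx, ENNReal.ofReal_ne_top⟩) h2
      rwa [ENNReal.toReal_add hx ENNReal.ofReal_ne_top, ENNReal.toReal_natCast,
        ENNReal.toReal_ofReal (by positivity)] at this
    rw [Real.dist_eq, abs_sub_lt_iff]
    constructor <;> linarith
  rw [Nat.isClosedEmbedding_coe_real.isClosed_range.closure_eq] at key
  obtain ⟨c, hc⟩ := key
  exact ⟨c, by rw [← ENNReal.ofReal_toReal hx, ← hc, ENNReal.ofReal_natCast]⟩

/-- If `μⱼ` are `ℕ̄`-valued measures finite on each clopen `Sₙ ↑ S` and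
`π(μⱼ(·∩Sₙ), θₙ) → 0` for every `n` (Lévy–Prokhorov distance), then the finite measures `θₙ`
are consistent: `θₘ = θ_k(·∩Sₘ)` for `m < k`, and `θ(A) = limₙ θₙ(A) (= supₙ θₙ(A))` defines a
σ-additive `ℕ̄`-valued measure with `θₘ = θ(·∩Sₘ)`. -/
theorem stmt_4 {S : Type*} [MetricSpace S] [CompleteSpace S] [SecondCountableTopology S]
    [MeasurableSpace S] [BorelSpace S]
    (Sn : ℕ → Set S) (hclopen : ∀ n, IsClopen (Sn n)) (hmono : Monotone Sn)
    (hunion : ⋃ n, Sn n = Set.univ)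
    (μ : ℕ → Measure S)
    (hμnat : ∀ j, ∀ A : Set S, MeasurableSet A → μ j A = ⊤ ∨ ∃ k : ℕ, μ j A = k)
    (hμfin : ∀ j n, μ j (Sn n) < ⊤)
    (θ : ℕ → Measure S) (hθfin : ∀ n, IsFiniteMeasure (θ n))
    (hconv : ∀ n, Tendsto (fun j => levyProkhorovEDist ((μ j).restrict (Sn n)) (θ n))
      atTop (nhds 0)) :
    (∀ m k, m < k → θ m = (θ k).restrict (Sn m)) ∧
    ∃ Θ : Measure S,
      (∀ A : Set S, MeasurableSet A → Θ A = ⊤ ∨ ∃ k : ℕ, Θ A = k) ∧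
      (∀ A : Set S, MeasurableSet A → Θ A = ⨆ n, θ n A) ∧
      (∀ m, θ m = Θ.restrict (Sn m)) := by
  have mSn : ∀ n, MeasurableSet (Sn n) := fun n => (hclopen n).isClosed.measurableSet
  -- pick an index j with both LP distances small
  have hjj : ∀ (m k : ℕ) (ε : ℝ), 0 < ε → ∃ j,
      levyProkhorovEDist ((μ j).restrict (Sn m)) (θ m) < ENNReal.ofReal ε ∧
      levyProkhorovEDist ((μ j).restrict (Sn k)) (θ k) < ENNReal.ofReal ε := by
    intro m k ε hε
    have h1 := (hconv m).eventually_lt_const (ENNReal.ofReal_pos.mpr hε)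
    have h2 := (hconv k).eventually_lt_const (ENNReal.ofReal_pos.mpr hε)
    exact (h1.and h2).exists
  -- small thickening radius for a closed set
  have hrad : ∀ (n : ℕ) (F : Set S), IsClosed F → ∀ δ : ℝ≥0∞, δ ≠ 0 →
      ∃ r : ℝ, 0 < r ∧ θ n (Metric.thickening r F) ≤ θ n F + δ := by
    intro n F hF δ hδ
    haveI := hθfin n
    have ht := tendsto_measure_thickening_of_isClosed (μ := θ n)
      ⟨1, one_pos, measure_ne_top _ _⟩ hF
    have hlt : θ n F < θ n F + δ := ENNReal.lt_add_right (measure_ne_top _ _) hδ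
    obtain ⟨r, hr1, hr2⟩ := ((ht.eventually_lt_const hlt).and self_mem_nhdsWithin).exists
    exact ⟨r, hr2, hr1.le⟩
  -- θ n is concentrated on Sn n
  have hnull : ∀ n, θ n (Sn n)ᶜ = 0 := by
    intro n
    haveI := hθfin n
    have hle : θ n Set.univ ≤ θ n (Sn n) := by
      refine aux_le4 (measure_ne_top _ _) fun δ hδ => ?_
      have hδ' : ENNReal.ofReal δ ≠ 0 := (ENNReal.ofReal_pos.mpr hδ).ne'
      obtain ⟨r, hr, hrθ⟩ := hrad n (Sn n) (hclopen n).isClosed (ENNReal.ofReal δ) hδ'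
      set ε : ℝ := min (r / 2) δ with hεdef
      have hε : 0 < ε := lt_min (by positivity) hδ
      have hεδ : ENNReal.ofReal ε ≤ ENNReal.ofReal δ :=
        ENNReal.ofReal_le_ofReal (min_le_right _ _)
      obtain ⟨j, hj1, -⟩ := hjj n n ε hε
      have step1 : θ n Set.univ ≤
          (μ j).restrict (Sn n) (Metric.thickening ε Set.univ) + ENNReal.ofReal ε := by
        have := right_measure_le_of_levyProkhorovEDist_lt hj1 MeasurableSet.univ
        rwa [ENNReal.toReal_ofReal hε.le] at this
      have e1 : (μ j).restrict (Sn n) (Metric.thickening ε Set.univ) ≤ μ j (Sn n) := by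
        calc (μ j).restrict (Sn n) (Metric.thickening ε Set.univ)
            ≤ (μ j).restrict (Sn n) Set.univ := measure_mono (Set.subset_univ _)
          _ = μ j (Sn n) := Measure.restrict_apply_univ _
      have e2 : μ j (Sn n) = (μ j).restrict (Sn n) (Sn n) := by
        rw [Measure.restrict_apply (mSn n), Set.inter_self]
      have step3 : (μ j).restrict (Sn n) (Sn n) ≤
          θ n (Metric.thickening ε (Sn n)) + ENNReal.ofReal ε := by
        have := left_measure_le_of_levyProkhorovEDist_lt hj1 (mSn n)
        rwa [ENNReal.toReal_ofReal hε.le] at this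
      have e3 : θ n (Metric.thickening ε (Sn n)) ≤ θ n (Metric.thickening r (Sn n)) :=
        measure_mono (Metric.thickening_mono (le_trans (min_le_left _ _) (by linarith)) _)
      calc θ n Set.univ
          ≤ (μ j).restrict (Sn n) (Metric.thickening ε Set.univ) + ENNReal.ofReal ε := step1
        _ ≤ μ j (Sn n) + ENNReal.ofReal ε := add_le_add_left e1 _
        _ = (μ j).restrict (Sn n) (Sn n) + ENNReal.ofReal ε := by rw [e2]
        _ ≤ (θ n (Metric.thickening ε (Sn n)) + ENNReal.ofReal ε) + ENNReal.ofReal ε :=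
            add_le_add_left step3 _
        _ ≤ (θ n (Metric.thickening r (Sn n)) + ENNReal.ofReal ε) + ENNReal.ofReal ε := by
            gcongr
        _ ≤ ((θ n (Sn n) + ENNReal.ofReal δ) + ENNReal.ofReal δ) + ENNReal.ofReal δ := by
            gcongr
        _ ≤ θ n (Sn n) + 4 * ENNReal.ofReal δ := by
            rw [show (θ n (Sn n) + ENNReal.ofReal δ) + ENNReal.ofReal δ + ENNReal.ofReal δ
              = θ n (Sn n) + 3 * ENNReal.ofReal δ by ring]
            exact add_le_add_right (mul_le_mul_left (by norm_num) _) _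
    rw [measure_compl (mSn n) (measure_ne_top _ _)]
    exact tsub_eq_zero_of_le hle
  -- θ n A = θ n (A ∩ Sn n)
  have hconc : ∀ (n : ℕ) (A : Set S), θ n A = θ n (A ∩ Sn n) := by
    intro n A
    refine le_antisymm ?_ (measure_mono Set.inter_subset_left)
    calc θ n A ≤ θ n ((A ∩ Sn n) ∪ (Sn n)ᶜ) := by
          refine measure_mono fun x hx => ?_
          by_cases hxS : x ∈ Sn n
          · exact Or.inl ⟨hx, hxS⟩
          · exact Or.inr hxS
      _ ≤ θ n (A ∩ Sn n) + θ n (Sn n)ᶜ := measure_union_le _ _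
      _ = θ n (A ∩ Sn n) := by rw [hnull n, add_zero]
  -- one-sided comparison
  have key1 : ∀ m k, m ≤ k → ∀ A : Set S, MeasurableSet A → θ m A ≤ θ k (A ∩ Sn m) := by
    intro m k hmk A hA
    haveI := hθfin m
    haveI := hθfin k
    refine aux_le4 (measure_ne_top _ _) fun δ hδ => ?_
    have hδ' : ENNReal.ofReal δ ≠ 0 := (ENNReal.ofReal_pos.mpr hδ).ne'
    obtain ⟨F, hFsub, hFcl, hFlt⟩ :=
      (hA.inter (mSn m)).exists_isClosed_lt_add (μ := θ m) (measure_ne_top _ _) hδ'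
    obtain ⟨r, hr, hrθ⟩ := hrad k F hFcl (ENNReal.ofReal δ) hδ'
    set ε : ℝ := min (r / 2) δ with hεdef
    have hε : 0 < ε := lt_min (by positivity) hδ
    have hεδ : ENNReal.ofReal ε ≤ ENNReal.ofReal δ :=
      ENNReal.ofReal_le_ofReal (min_le_right _ _)
    obtain ⟨j, hj1, hj2⟩ := hjj m k ε hε
    have s1 : θ m F ≤ (μ j).restrict (Sn m) (Metric.thickening ε F) + ENNReal.ofReal ε := by
      have := right_measure_le_of_levyProkhorovEDist_lt hj1 hFcl.measurableSet
      rwa [ENNReal.toReal_ofReal hε.le] at this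
    have s2 : (μ j).restrict (Sn m) (Metric.thickening ε F) ≤
        (μ j).restrict (Sn k) (Metric.thickening ε F) := by
      rw [Measure.restrict_apply Metric.isOpen_thickening.measurableSet,
        Measure.restrict_apply Metric.isOpen_thickening.measurableSet]
      exact measure_mono (Set.inter_subset_inter_right _ (hmono hmk))
    have s3 : (μ j).restrict (Sn k) (Metric.thickening ε F) ≤
        θ k (Metric.thickening ε (Metric.thickening ε F)) + ENNReal.ofReal ε := by
      have := left_measure_le_of_levyProkhorovEDist_lt (B := Metric.thickening ε F) hj2
        Metric.isOpen_thickening.measurableSet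
      rwa [ENNReal.toReal_ofReal hε.le] at this
    have s4 : θ k (Metric.thickening ε (Metric.thickening ε F)) ≤
        θ k (Metric.thickening r F) := by
      refine measure_mono ((Metric.thickening_thickening_subset ε ε F).trans
        (Metric.thickening_mono ?_ F))
      have := min_le_left (r / 2) δ
      have : ε ≤ r / 2 := this
      linarith
    have s5 : θ k F ≤ θ k (A ∩ Sn m) := measure_mono hFsub
    calc θ m A = θ m (A ∩ Sn m) := hconc m A
      _ ≤ θ m F + ENNReal.ofReal δ := hFlt.le
      _ ≤ ((μ j).restrict (Sn m) (Metric.thickening ε F) + ENNReal.ofReal ε) +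
            ENNReal.ofReal δ := add_le_add_left s1 _
      _ ≤ ((μ j).restrict (Sn k) (Metric.thickening ε F) + ENNReal.ofReal ε) +
            ENNReal.ofReal δ := by gcongr
      _ ≤ ((θ k (Metric.thickening ε (Metric.thickening ε F)) + ENNReal.ofReal ε) +
            ENNReal.ofReal ε) + ENNReal.ofReal δ := by
          exact add_le_add_left (add_le_add_left s3 _) _
      _ ≤ ((θ k (Metric.thickening r F) + ENNReal.ofReal ε) + ENNReal.ofReal ε) +
            ENNReal.ofReal δ := by gcongr
      _ ≤ (((θ k F + ENNReal.ofReal δ) + ENNReal.ofReal δ) + ENNReal.ofReal δ) +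
            ENNReal.ofReal δ := by gcongr
      _ ≤ (((θ k (A ∩ Sn m) + ENNReal.ofReal δ) + ENNReal.ofReal δ) + ENNReal.ofReal δ) +
            ENNReal.ofReal δ := by gcongr
      _ = θ k (A ∩ Sn m) + 4 * ENNReal.ofReal δ := by ring
  -- mass identity, uses clopen-ness
  have key2 : ∀ m k, m ≤ k → θ k (Sn m) = θ m Set.univ := by
    intro m k hmk
    haveI := hθfin m
    haveI := hθfin k
    refine le_antisymm ?_ ?_
    · refine aux_le4 (measure_ne_top _ _) fun δ hδ => ?_
      have hδ' : (0 : ℝ≥0∞) < ENNReal.ofReal δ := ENNReal.ofReal_pos.mpr hδ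
      have hCop : IsOpen (Sn m) := (hclopen m).isOpen
      have hCcl : IsClosed (Sn m) := (hclopen m).isClosed
      set E : ℕ → Set S := fun i =>
        Metric.thickening (1 / (i + 1)) (Sn m) ∩ Metric.thickening (1 / (i + 1)) (Sn m)ᶜ
        with hEdef
      have hEanti : Antitone E := by
        intro i j hij
        have hle : (1 : ℝ) / (j + 1) ≤ 1 / (i + 1) := by
          apply one_div_le_one_div_of_le (by positivity)
          have : (i : ℝ) ≤ j := by exact_mod_cast hij
          linarith
        exact Set.inter_subset_inter (Metric.thickening_mono hle _)
          (Metric.thickening_mono hle _)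
      have hEempty : ⋂ i, E i = ∅ := by
        rw [Set.eq_empty_iff_forall_notMem]
        intro x hx
        simp only [Set.mem_iInter, hEdef, Set.mem_inter_iff] at hx
        have hxC : x ∈ closure (Sn m) := by
          rw [Metric.mem_closure_iff]
          intro ε' hε'
          obtain ⟨i, hi⟩ := exists_nat_one_div_lt hε'
          obtain ⟨y, hy, hdy⟩ := Metric.mem_thickening_iff.mp (hx i).1
          exact ⟨y, hy, hdy.trans hi⟩
        have hxCc : x ∈ closure (Sn m)ᶜ := by
          rw [Metric.mem_closure_iff]
          intro ε' hε'
          obtain ⟨i, hi⟩ := exists_nat_one_div_lt hε'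
          obtain ⟨y, hy, hdy⟩ := Metric.mem_thickening_iff.mp (hx i).2
          exact ⟨y, hy, hdy.trans hi⟩
        rw [hCcl.closure_eq] at hxC
        rw [hCop.isClosed_compl.closure_eq] at hxCc
        exact hxCc hxC
      have hEtend := tendsto_measure_iInter_atTop (μ := θ k)
        (fun i => ((Metric.isOpen_thickening.inter
          Metric.isOpen_thickening).measurableSet).nullMeasurableSet)
        hEanti ⟨0, measure_ne_top _ _⟩
      rw [hEempty] at hEtend
      have hEtend0 : Tendsto (fun i => θ k (E i)) atTop (nhds 0) := by
        rw [measure_empty] at hEtend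
        exact hEtend
      obtain ⟨i, hEi⟩ := (hEtend0.eventually_lt_const hδ').exists
      set r : ℝ := 1 / (i + 1) with hrdef
      have hr : 0 < r := by positivity
      set ε : ℝ := min (r / 2) δ with hεdef
      have hε : 0 < ε := lt_min (by positivity) hδ
      have hεr : ε ≤ r / 2 := min_le_left _ _
      have hεδ : ENNReal.ofReal ε ≤ ENNReal.ofReal δ :=
        ENNReal.ofReal_le_ofReal (min_le_right _ _)
      obtain ⟨j, hj1, hj2⟩ := hjj m k ε hε
      have s1 : θ k (Sn m) ≤
          (μ j).restrict (Sn k) (Metric.thickening ε (Sn m)) + ENNReal.ofReal ε := by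
        have := right_measure_le_of_levyProkhorovEDist_lt hj2 (mSn m)
        rwa [ENNReal.toReal_ofReal hε.le] at this
      have s2 : (μ j).restrict (Sn k) (Metric.thickening ε (Sn m)) ≤
          μ j (Sn m) + (μ j).restrict (Sn k) (Metric.thickening ε (Sn m) ∩ (Sn m)ᶜ) := by
        rw [Measure.restrict_apply Metric.isOpen_thickening.measurableSet,
          Measure.restrict_apply (Metric.isOpen_thickening.inter
            hCcl.isOpen_compl).measurableSet]
        refine le_trans (measure_mono ?_) (measure_union_le _ _)
        intro x hx
        by_cases hxC : x ∈ Sn m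
        · exact Or.inl hxC
        · exact Or.inr ⟨⟨hx.1, hxC⟩, hx.2⟩
      have s2a : μ j (Sn m) ≤ θ m Set.univ + ENNReal.ofReal ε := by
        have h0 : μ j (Sn m) = (μ j).restrict (Sn m) Set.univ := by
          rw [Measure.restrict_apply_univ]
        have := left_measure_le_of_levyProkhorovEDist_lt hj1 MeasurableSet.univ
        rw [ENNReal.toReal_ofReal hε.le] at this
        rw [h0]
        exact this.trans (add_le_add_left (measure_mono (Set.subset_univ _)) _)
      have s2b : (μ j).restrict (Sn k) (Metric.thickening ε (Sn m) ∩ (Sn m)ᶜ) ≤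
          θ k (Metric.thickening ε (Metric.thickening ε (Sn m) ∩ (Sn m)ᶜ)) +
            ENNReal.ofReal ε := by
        have := left_measure_le_of_levyProkhorovEDist_lt
          (B := Metric.thickening ε (Sn m) ∩ (Sn m)ᶜ) hj2
          (Metric.isOpen_thickening.inter hCcl.isOpen_compl).measurableSet
        rwa [ENNReal.toReal_ofReal hε.le] at this
      have s2c : Metric.thickening ε (Metric.thickening ε (Sn m) ∩ (Sn m)ᶜ) ⊆ E i := by
        refine Set.subset_inter ?_ ?_
        · refine ((Metric.thickening_subset_of_subset ε Set.inter_subset_left).trans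
            ((Metric.thickening_thickening_subset ε ε _).trans
              (Metric.thickening_mono ?_ _)))
          linarith
        · refine (Metric.thickening_subset_of_subset ε Set.inter_subset_right).trans
            (Metric.thickening_mono ?_ _)
          linarith
      calc θ k (Sn m)
          ≤ (μ j).restrict (Sn k) (Metric.thickening ε (Sn m)) + ENNReal.ofReal ε := s1
        _ ≤ (μ j (Sn m) + (μ j).restrict (Sn k)
              (Metric.thickening ε (Sn m) ∩ (Sn m)ᶜ)) + ENNReal.ofReal ε :=
            add_le_add_left s2 _
        _ ≤ ((θ m Set.univ + ENNReal.ofReal ε) +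
              (θ k (Metric.thickening ε (Metric.thickening ε (Sn m) ∩ (Sn m)ᶜ)) +
                ENNReal.ofReal ε)) + ENNReal.ofReal ε := by
            exact add_le_add_left (add_le_add s2a s2b) _
        _ ≤ ((θ m Set.univ + ENNReal.ofReal ε) + (θ k (E i) + ENNReal.ofReal ε)) +
              ENNReal.ofReal ε := by
            exact add_le_add_left (add_le_add_right
              (add_le_add_left (measure_mono s2c) _) _) _
        _ ≤ ((θ m Set.univ + ENNReal.ofReal δ) + (ENNReal.ofReal δ + ENNReal.ofReal δ)) +
              ENNReal.ofReal δ := by have hEi' := hEi.le; gcongr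
        _ = θ m Set.univ + 4 * ENNReal.ofReal δ := by ring
    · have := key1 m k hmk Set.univ MeasurableSet.univ
      rwa [Set.univ_inter] at this
  -- full comparison
  have key : ∀ m k, m ≤ k → ∀ A : Set S, MeasurableSet A → θ m A = θ k (A ∩ Sn m) := by
    intro m k hmk A hA
    haveI := hθfin m
    haveI := hθfin k
    have h1 := key1 m k hmk A hA
    have h2 := key1 m k hmk Aᶜ hA.compl
    have hsum1 : θ m A + θ m Aᶜ = θ m Set.univ := measure_add_measure_compl hA
    have hsum2 : θ k (A ∩ Sn m) + θ k (Aᶜ ∩ Sn m) = θ k (Sn m) := by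
      have := measure_inter_add_diff (μ := θ k) (Sn m) hA
      rw [Set.inter_comm (Sn m) A] at this
      rw [show (Sn m) \ A = Aᶜ ∩ Sn m by rw [Set.diff_eq, Set.inter_comm]] at this
      exact this
    by_contra hne
    have hlt : θ m A < θ k (A ∩ Sn m) := lt_of_le_of_ne h1 hne
    have hcontra : θ m Set.univ < θ k (Sn m) := by
      calc θ m Set.univ = θ m A + θ m Aᶜ := hsum1.symm
        _ < θ k (A ∩ Sn m) + θ k (Aᶜ ∩ Sn m) :=
            ENNReal.add_lt_add_of_lt_of_le (measure_ne_top _ _) hlt h2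
        _ = θ k (Sn m) := hsum2
    rw [key2 m k hmk] at hcontra
    exact lt_irrefl _ hcontra
  -- integer-valuedness of θ n
  have hint : ∀ (n : ℕ) (A : Set S), MeasurableSet A → ∃ c : ℕ, θ n A = c := by
    intro n A hA
    haveI := hθfin n
    refine aux_nat_of_close (measure_ne_top _ _) fun δ hδ => ?_
    have hδ2 : 0 < δ / 2 := by positivity
    have hδ2' : ENNReal.ofReal (δ / 2) ≠ 0 := (ENNReal.ofReal_pos.mpr hδ2).ne'
    obtain ⟨F, hFsub, hFcl, hFlt⟩ := hA.exists_isClosed_lt_add (μ := θ n) (measure_ne_top _ _) hδ2'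
    obtain ⟨r, hr, hrθ⟩ := hrad n F hFcl (ENNReal.ofReal (δ / 2)) hδ2'
    set ε : ℝ := min (r / 2) (δ / 2) with hεdef
    have hε : 0 < ε := lt_min (by positivity) hδ2
    have hεδ : ENNReal.ofReal ε ≤ ENNReal.ofReal (δ / 2) :=
      ENNReal.ofReal_le_ofReal (min_le_right _ _)
    have hhalf : ENNReal.ofReal (δ / 2) + ENNReal.ofReal (δ / 2) = ENNReal.ofReal δ := by
      rw [← ENNReal.ofReal_add hδ2.le hδ2.le, add_halves]
    obtain ⟨j, hj1, -⟩ := hjj n n ε hε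
    have hmble : MeasurableSet (Metric.thickening ε F ∩ Sn n) :=
      Metric.isOpen_thickening.measurableSet.inter (mSn n)
    have hfin : μ j (Metric.thickening ε F ∩ Sn n) ≠ ⊤ :=
      (lt_of_le_of_lt (measure_mono Set.inter_subset_right) (hμfin j n)).ne
    obtain ⟨c, hc⟩ : ∃ c : ℕ, μ j (Metric.thickening ε F ∩ Sn n) = c := by
      rcases hμnat j _ hmble with h | h
      · exact absurd h hfin
      · exact h
    have hrestr : (μ j).restrict (Sn n) (Metric.thickening ε F) =
        μ j (Metric.thickening ε F ∩ Sn n) := by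
      rw [Measure.restrict_apply Metric.isOpen_thickening.measurableSet]
    refine ⟨c, ?_, ?_⟩
    · have s1 : θ n F ≤ (μ j).restrict (Sn n) (Metric.thickening ε F) + ENNReal.ofReal ε := by
        have := right_measure_le_of_levyProkhorovEDist_lt hj1 hFcl.measurableSet
        rwa [ENNReal.toReal_ofReal hε.le] at this
      calc θ n A ≤ θ n F + ENNReal.ofReal (δ / 2) := hFlt.le
        _ ≤ ((μ j).restrict (Sn n) (Metric.thickening ε F) + ENNReal.ofReal ε) +
              ENNReal.ofReal (δ / 2) := add_le_add_left s1 _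
        _ = ((c : ℝ≥0∞) + ENNReal.ofReal ε) + ENNReal.ofReal (δ / 2) := by
            rw [hrestr, hc]
        _ ≤ ((c : ℝ≥0∞) + ENNReal.ofReal (δ / 2)) + ENNReal.ofReal (δ / 2) := by gcongr
        _ = (c : ℝ≥0∞) + ENNReal.ofReal δ := by rw [add_assoc, hhalf]
    · have s3 : (μ j).restrict (Sn n) (Metric.thickening ε F) ≤
          θ n (Metric.thickening ε (Metric.thickening ε F)) + ENNReal.ofReal ε := by
        have := left_measure_le_of_levyProkhorovEDist_lt (B := Metric.thickening ε F) hj1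
          Metric.isOpen_thickening.measurableSet
        rwa [ENNReal.toReal_ofReal hε.le] at this
      have s4 : θ n (Metric.thickening ε (Metric.thickening ε F)) ≤
          θ n (Metric.thickening r F) := by
        refine measure_mono ((Metric.thickening_thickening_subset ε ε F).trans
          (Metric.thickening_mono ?_ F))
        have hεr : ε ≤ r / 2 := min_le_left _ _
        linarith
      calc (c : ℝ≥0∞) = (μ j).restrict (Sn n) (Metric.thickening ε F) := by rw [hrestr, hc]
        _ ≤ θ n (Metric.thickening ε (Metric.thickening ε F)) + ENNReal.ofReal ε := s3
        _ ≤ θ n (Metric.thickening r F) + ENNReal.ofReal ε := add_le_add_left s4 _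
        _ ≤ (θ n F + ENNReal.ofReal (δ / 2)) + ENNReal.ofReal ε := add_le_add_left hrθ _
        _ ≤ (θ n A + ENNReal.ofReal (δ / 2)) + ENNReal.ofReal (δ / 2) := by gcongr
        _ = θ n A + ENNReal.ofReal δ := by rw [add_assoc, hhalf]
  -- monotonicity in n on measurable sets
  have mono_meas : ∀ (A : Set S), MeasurableSet A → Monotone fun n => θ n A := by
    intro A hA
    apply monotone_nat_of_le_succ
    intro n
    rw [key n (n + 1) (Nat.le_succ n) A hA]
    exact measure_mono Set.inter_subset_left
  refine ⟨fun m k hmk => ?_, ?_⟩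
  · ext A hA
    rw [Measure.restrict_apply hA]
    exact key m k hmk.le A hA
  · -- construct Θ
    have hadd : ∀ ⦃f : ℕ → Set S⦄ (h : ∀ i, MeasurableSet (f i)),
        Pairwise (Function.onFun Disjoint f) →
        (⨆ n, θ n (⋃ i, f i)) = ∑' i, ⨆ n, θ n (f i) := by
      intro f hf hdisj
      have h1 : ∀ n, θ n (⋃ i, f i) = ∑' i, θ n (f i) := fun n => measure_iUnion hdisj hf
      have h2 := lintegral_iSup (μ := Measure.count) (f := fun n i => θ n (f i))
        (fun n => measurable_of_countable _)
        (fun a b hab i => mono_meas (f i) (hf i) hab)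
      simp_rw [lintegral_count] at h2
      calc (⨆ n, θ n (⋃ i, f i)) = ⨆ n, ∑' i, θ n (f i) := iSup_congr h1
        _ = ∑' i, ⨆ n, θ n (f i) := h2.symm
    obtain ⟨Θ, hΘ⟩ : ∃ Θ : Measure S, ∀ A : Set S, MeasurableSet A → Θ A = ⨆ n, θ n A :=
      ⟨Measure.ofMeasurable (fun A _ => ⨆ n, θ n A) (by simp) hadd,
        fun A hA => Measure.ofMeasurable_apply A hA⟩
    refine ⟨Θ, ?_, fun A hA => hΘ A hA, ?_⟩
    · intro A hA
      rw [hΘ A hA]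
      choose c hc using fun n => hint n A hA
      by_cases hT : (⨆ n, θ n A) = ⊤
      · exact Or.inl hT
      · right
        have hbound : ∀ n, (c n : ℝ) ≤ (⨆ n, θ n A).toReal := by
          intro n
          have h1 : θ n A ≤ ⨆ n, θ n A := le_iSup (fun n => θ n A) n
          have := ENNReal.toReal_mono hT h1
          rwa [hc n, ENNReal.toReal_natCast] at this
        have hcM : ∀ n, c n ≤ ⌈(⨆ n, θ n A).toReal⌉₊ := by
          intro n
          have := (hbound n).trans (Nat.le_ceil _)
          exact_mod_cast this
        have hfinr : (Set.range fun n => θ n A).Finite := by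
          apply Set.Finite.subset ((Set.finite_Iic ⌈(⨆ n, θ n A).toReal⌉₊).image
            (fun m : ℕ => (m : ℝ≥0∞)))
          rintro x ⟨n, rfl⟩
          exact ⟨c n, hcM n, (hc n).symm⟩
        have hmem := Set.Nonempty.csSup_mem (Set.range_nonempty _) hfinr
        have hmem' : (⨆ n, θ n A) ∈ Set.range fun n => θ n A := by
          rw [← sSup_range]
          exact hmem
        obtain ⟨n, hn⟩ := hmem'
        refine ⟨c n, ?_⟩
        rw [← hn]
        exact hc n
    · intro m
      haveI := hθfin m
      ext A hA
      rw [Measure.restrict_apply hA, hΘ _ (hA.inter (mSn m))]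
      refine le_antisymm ?_ (iSup_le fun n => ?_)
      · calc θ m A = θ m (A ∩ Sn m) := hconc m A
          _ ≤ ⨆ n, θ n (A ∩ Sn m) := le_iSup (fun n => θ n (A ∩ Sn m)) m
      · rcases le_total n m with h | h
        · rw [key n m h (A ∩ Sn m) (hA.inter (mSn m))]
          exact measure_mono fun x hx => hx.1.1
        · rw [← key m n h A hA]
end
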